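/- Bounds for the localization norm of a star product: For any a, b ∈ V and any m ∈ ℕ₀, ‖a⋆b‖_loc ≤ ‖L(b)‖ ( 2^{m+1} ‖a‖_loc + ∑_{n=0}^{∞} 2^{−(n+1)} ‖P̃_n L(a) Q̃_{n+m}‖ ), and ‖a⋆b‖_loc ≤ ‖L(a)‖ ( 2^{m+1} ‖b‖_loc + ∑_{n=0}^{∞} 2^{−(n+1)} ‖Q̃_{n+m} L(b) P̃_n‖ ). -/

import Mathlib

open Filter MeasureTheory

noncomputable section

/-- A symbol `a`, where `a k` is the circle function `a_{k/2}` at half-integer `x = k/2`. -/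
abbrev Symb := ℤ → ℂ → ℂ

/-- `m`-th Fourier coefficient of a function on the unit circle. -/
def fCoef (f : ℂ → ℂ) (m : ℤ) : ℂ :=
  (2 * (Real.pi : ℂ))⁻¹ * ∫ p in (-Real.pi)..Real.pi,
    f (Complex.exp (Complex.I * (p : ℂ))) * Complex.exp (-(Complex.I * (m : ℂ) * (p : ℂ)))

/-- Matrix element `L_{j,k}(a) = (a_{(j+k)/2})_{j-k}` of the star-Laurent operator. -/
def Lmat (a : Symb) (j k : ℤ) : ℂ := fCoef (a (j + k)) (j - k)

/-- The annulus `ρ < |z| < ρ⁻¹`. -/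
def annulus (ρ : ℝ) : Set ℂ := {z : ℂ | ρ < ‖z‖ ∧ ‖z‖ < ρ⁻¹}

/-- Membership in `V_ρ`: analytic extension to the annulus, uniformly bounded in `x`. -/
def memVrho (ρ : ℝ) (a : Symb) : Prop :=
  (∀ k : ℤ, AnalyticOnNhd ℂ (a k) (annulus ρ)) ∧
    ∃ M : ℝ, ∀ (k : ℤ), ∀ z ∈ annulus ρ, ‖a k z‖ ≤ M

/-- Membership in `V = ⋃_{ρ ∈ (0,1)} V_ρ`. -/
def memV (a : Symb) : Prop := ∃ ρ : ℝ, ρ ∈ Set.Ioo (0 : ℝ) 1 ∧ memVrho ρ a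

/-- The Moyal star product of two symbols. -/
def starProd (a b : Symb) : Symb := fun x z =>
  ∑' mn : ℤ × ℤ, z ^ (mn.1 + mn.2) * fCoef (a (x + mn.1)) mn.2 * fCoef (b (x - mn.2)) mn.1

/-- Two symbols are equivalent if they generate the same star-Laurent matrix. -/
def symbolEquiv (a b : Symb) : Prop := ∀ j k : ℤ, Lmat a j k = Lmat b j k

/-- The unit symbol. -/
def oneSymbol : Symb := fun _ _ => 1

/-- `+` symbols: the star-Laurent matrix is lower triangular. -/
def isPlus (a : Symb) : Prop := ∀ j k : ℤ, j < k → Lmat a j k = 0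

/-- `-` symbols: the star-Laurent matrix is upper triangular. -/
def isMinus (a : Symb) : Prop := ∀ j k : ℤ, k < j → Lmat a j k = 0

/-- Matrix element of the star-Toeplitz operator (meaningful for `j, k ≥ 1`). -/
def Tmat (a : Symb) (j k : ℕ) : ℂ := Lmat a (j : ℤ) (k : ℤ)

/-- Matrix element of the star-Hankel operator (meaningful for `j, k ≥ 1`). -/
def Hmat (a : Symb) (j k : ℕ) : ℂ := fCoef (a ((j : ℤ) - k + 1)) ((j : ℤ) + k - 1)

/-- The `n × n` star-Toeplitz matrix. -/
def Tn (a : Symb) (n : ℕ) : Matrix (Fin n) (Fin n) ℂ :=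
  Matrix.of fun j k : Fin n => Lmat a ((j : ℤ) + 1) ((k : ℤ) + 1)

/-- The reflected symbol `(a^∼)_x(z) = a_{1-x}(z⁻¹)`. -/
def reflect (a : Symb) : Symb := fun x z => a (2 - x) z⁻¹

/-- Pointwise difference of symbols. -/
def subSym (a b : Symb) : Symb := fun x z => a x z - b x z

/-- Pointwise scalar multiple of a symbol. -/
def smulSym (c : ℂ) (a : Symb) : Symb := fun x z => c * a x z

/-- Star powers of a symbol. -/
def starPow (a : Symb) : ℕ → Symb
  | 0 => oneSymbol
  | n + 1 => starProd a (starPow a n)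

/-- The star exponential of a symbol. -/
def expStar (a : Symb) : Symb := fun x z =>
  ∑' n : ℕ, ((Nat.factorial n : ℂ))⁻¹ * starPow a n x z

/-- `b` is a star logarithm in `V` of `a`. -/
def IsStarLog (b a : Symb) : Prop := memV b ∧ symbolEquiv (expStar b) a

/-- `b` is a star inverse of `a`. -/
def IsStarInv (a b : Symb) : Prop :=
  symbolEquiv (starProd a b) oneSymbol ∧ symbolEquiv (starProd b a) oneSymbol

/-- The symbol `(x, z) ↦ z^n`. -/
def zpowSym (n : ℤ) : Symb := fun _ z => z ^ n

/-- The Moyal bracket `{c, d}_M = -i (c ⋆ d - d ⋆ c)`. -/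
def moyalBracket (c d : Symb) : Symb := fun x z =>
  -Complex.I * (starProd c d x z - starProd d c x z)

/-- `a` has zero star winding number: it admits left and right Wiener-Hopf star
factorizations with `±` factors in `V` whose star logarithms exist in `V`. -/
def HasZeroStarWinding (a : Symb) : Prop :=
  ∃ aLp aLm aRm aRp bLp bLm bRm bRp : Symb,
    isPlus aLp ∧ isMinus aLm ∧ isMinus aRm ∧ isPlus aRp ∧
    memV aLp ∧ memV aLm ∧ memV aRm ∧ memV aRp ∧
    IsStarLog bLp aLp ∧ IsStarLog bLm aLm ∧ IsStarLog bRm aRm ∧ IsStarLog bRp aRp ∧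
    symbolEquiv a (starProd aLp aLm) ∧ symbolEquiv a (starProd aRm aRp)

/-- Operator norm of an infinite matrix, as the least constant `C` with
`‖A v‖₂ ≤ C ‖v‖₂` for finitely supported `v`. -/
def matOpNorm {ι κ : Type*} (A : ι → κ → ℂ) : ℝ :=
  sInf {C : ℝ | 0 ≤ C ∧ ∀ v : κ →₀ ℂ,
    ∑' j : ι, ‖∑ k ∈ v.support, A j k * v k‖ ^ 2 ≤ C ^ 2 * ∑ k ∈ v.support, ‖v k‖ ^ 2}

/-- The matrix of `P̃_n A P̃_n`. -/
def PAP (n : ℕ) (A : ℤ → ℤ → ℂ) : ℤ → ℤ → ℂ := fun j k =>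
  if |j| ≤ (n : ℤ) ∧ |k| ≤ (n : ℤ) then A j k else 0

/-- The matrix of `P̃_n A Q̃_m`. -/
def PAQ (n m : ℕ) (A : ℤ → ℤ → ℂ) : ℤ → ℤ → ℂ := fun j k =>
  if |j| ≤ (n : ℤ) ∧ ¬ |k| ≤ (m : ℤ) then A j k else 0

/-- The matrix of `Q̃_m A P̃_n`. -/
def QAP (m n : ℕ) (A : ℤ → ℤ → ℂ) : ℤ → ℤ → ℂ := fun j k =>
  if ¬ |j| ≤ (m : ℤ) ∧ |k| ≤ (n : ℤ) then A j k else 0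

/-- The localization norm `‖a‖_loc = ∑_{n≥0} 2^{-(n+1)} ‖P̃_n L(a) P̃_n‖`. -/
def locNorm (a : Symb) : ℝ :=
  ∑' n : ℕ, ((2 : ℝ))⁻¹ ^ (n + 1) * matOpNorm (PAP n (Lmat a))


/-- The operator exponential `e^T` applied to a symbol, via the power series. -/
def opExp (T : Symb → Symb) : Symb → Symb := fun d x z =>
  ∑' n : ℕ, ((Nat.factorial n : ℂ))⁻¹ * (T^[n] d) x z

/-- Taylor coefficients of `ψ₁(x) = 2x (x log x + 1 - x)/(x-1)²` around `x = 1`. -/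
def psi1Coef : ℕ → ℂ := fun j =>
  if j = 0 then 1 else 4 * (-1) ^ (j + 1) / ((j : ℂ) * ((j : ℂ) + 1) * ((j : ℂ) + 2))

/-- `ψ₁` of an operator, applied to a symbol, via the power series around the identity. -/
def opPsi1 (T : Symb → Symb) : Symb → Symb := fun d x z =>
  ∑' n : ℕ, psi1Coef n * ((fun e : Symb => fun x' z' => T e x' z' - e x' z')^[n] d) x z

/-- The operator `α • 𝓜(c)`, where `𝓜(c) d = {c,d}_M` is the Moyal adjoint action. -/
def MopS (c : Symb) (α : ℂ) : Symb → Symb := fun e => smulSym α (moyalBracket c e)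

/-- `Φ_BCH(c,d)` of the paper. -/
def PhiBCH (c d : Symb) : Symb := fun x z =>
  (∫ t in (0:ℝ)..(1:ℝ), ∫ s in (0:ℝ)..(1:ℝ),
      (opExp (MopS c (-Complex.I * (s : ℂ)))
        ((opPsi1 (fun e => opExp (MopS c Complex.I) (opExp (MopS d (Complex.I * (t : ℂ))) e))) d)) x z)
  - (∫ t in (0:ℝ)..(1:ℝ), ∫ s in (0:ℝ)..t,
      (opExp (MopS c (Complex.I * (s : ℂ)))
        (opExp (MopS d Complex.I)
          ((opPsi1 (fun e => opExp (MopS d (-Complex.I)) (opExp (MopS c (-Complex.I * (t : ℂ))) e))) c))) x z)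

/-- The pair `(c,d)` belongs to `S_Φ`. -/
def memSPhi (c d : Symb) : Prop :=
  ∃ (F : ℕ → Symb) (ε : ℝ), 0 < ε ∧
    (∀ ν : ℝ, |ν - 1| < ε → Summable (fun n : ℕ => matOpNorm (Lmat (F n)) * |ν| ^ n)) ∧
    (∀ ν : ℝ, |ν - 1| < ε → memV (fun x z => ∑' n : ℕ, (ν : ℂ) ^ n * F n x z)) ∧
    (∀ ν : ℝ, |ν - 1| < ε →
      symbolEquiv (PhiBCH (smulSym (ν : ℂ) c) (smulSym (ν : ℂ) d))
        (fun x z => ∑' n : ℕ, (ν : ℂ) ^ (n + 1) * F n x z))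

/-- A sequence of symbols regularizes `a` (Definition 3.13). -/
def Regularizes (A : ℕ → Symb) (a : Symb) : Prop :=
  Filter.Tendsto (fun k => locNorm (subSym (A k) a)) Filter.atTop (nhds 0) ∧
  ∃ (aLp aLm aRm aRp bLp bLm bRm bRp : ℕ → Symb) (ρ M : ℝ), ρ ∈ Set.Ioo (0:ℝ) 1 ∧
    (∀ k, isPlus (aLp k) ∧ isMinus (aLm k) ∧ isMinus (aRm k) ∧ isPlus (aRp k)) ∧
    (∀ k, memV (aLp k) ∧ memV (aLm k) ∧ memV (aRm k) ∧ memV (aRp k)) ∧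
    (∀ k, symbolEquiv (A k) (starProd (aLp k) (aLm k)) ∧
          symbolEquiv (A k) (starProd (aRm k) (aRp k))) ∧
    (∀ k, symbolEquiv (expStar (bLp k)) (aLp k) ∧ symbolEquiv (expStar (bLm k)) (aLm k) ∧
          symbolEquiv (expStar (bRm k)) (aRm k) ∧ symbolEquiv (expStar (bRp k)) (aRp k)) ∧
    (∀ k, memVrho ρ (bLp k) ∧ memVrho ρ (bLm k) ∧ memVrho ρ (bRm k) ∧ memVrho ρ (bRp k)) ∧
    (∀ k, ∀ b : Symb, (b = bLp k ∨ b = bLm k ∨ b = bRm k ∨ b = bRp k) →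
        ∀ (j : ℤ), ∀ z ∈ annulus ρ, ‖b j z‖ ≤ M) ∧
    (∀ k, memSPhi (bLp k) (bLm k) ∧ memSPhi (bRm k) (bRp k)) ∧
    (∀ k, ∀ b : Symb, (b = bLp k ∨ b = bLm k ∨ b = bRm k ∨ b = bRp k) →
        Summable (fun jl : ℕ × ℕ => ‖Tmat b (jl.1 + 1) (jl.2 + 1)‖))

/-- `a` admits a regularisation. -/
def IsRegularizable (a : Symb) : Prop := ∃ A : ℕ → Symb, Regularizes A a

/-- The boundary term `E_x^{R/L}` of the strong Szegő-type theorem; `k = 2x`. -/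
def Eterm (bp bm dm dp : Symb) (k : ℤ) : ℂ :=
  (1/2 : ℂ) * ∑' m : ℕ, ∑ j ∈ Finset.Icc 1 (m + 1),
    (fCoef (bp (k + 2*(j:ℤ) - ((m:ℤ) + 2))) ((m:ℤ) + 1) *
        fCoef (dm (k + 2*(j:ℤ) - ((m:ℤ) + 2))) (-((m:ℤ) + 1)) +
      fCoef (dp (k + 2*(j:ℤ) - ((m:ℤ) + 2))) ((m:ℤ) + 1) *
        fCoef (bm (k + 2*(j:ℤ) - ((m:ℤ) + 2))) (-((m:ℤ) + 1)))

/-- `T(cinv)` is a two-sided (matrix) inverse of `T(c)` on `ℓ²(ℕ)`. -/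
def TmatTwoSidedInverse (c cinv : Symb) : Prop :=
  ∀ j k : ℕ, 1 ≤ j → 1 ≤ k →
    (∑' l : ℕ, Tmat c j (l + 1) * Tmat cinv (l + 1) k) = (if j = k then 1 else 0) ∧
    (∑' l : ℕ, Tmat cinv j (l + 1) * Tmat c (l + 1) k) = (if j = k then 1 else 0)
-- ### block D : functions on ℝ × (strip) representing symbols

/-- The horizontal strip `log ρ < Im z < -log ρ` in the complex plane. -/
def strip (ρ : ℝ) : Set ℂ := {z : ℂ | Real.log ρ < z.im ∧ z.im < -Real.log ρ}

/-- `a = [F]`: the function `F` on `ℝ × (ℝ/2πℤ)` represents the symbol `a`. -/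
def RepBy (a : Symb) (F : ℝ → ℂ → ℂ) : Prop :=
  ∀ k m : ℤ, (k + m) % 2 = 0 →
    fCoef (a k) m = (2 * (Real.pi : ℂ))⁻¹ *
      ∫ p in (-Real.pi)..Real.pi, F ((k : ℝ) / 2) (p : ℂ) * Complex.exp (-(Complex.I * (m : ℂ) * (p : ℂ)))

/-- Partial derivative in the first (real) argument. -/
def D1 (F : ℝ → ℂ → ℂ) : ℝ → ℂ → ℂ := fun x p => deriv (fun y => F y p) x

/-- Partial derivative in the second (complex) argument. -/
def D2 (F : ℝ → ℂ → ℂ) : ℝ → ℂ → ℂ := fun x p => deriv (fun q => F x q) p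

/-- The `+` part `g⁺` of a function on `ℝ × (ℝ/2πℤ)`. -/
def plusPart (F : ℝ → ℂ → ℂ) : ℝ → ℂ → ℂ := fun y p =>
  ∑' n : ℕ, Complex.exp (Complex.I * (n : ℂ) * p) *
    ((2 * (Real.pi : ℂ))⁻¹ * ∫ q in (-Real.pi)..Real.pi,
      F y (q : ℂ) * Complex.exp (-(Complex.I * (n : ℂ) * (q : ℂ))))

/-- The `-` part `g⁻` of a function on `ℝ × (ℝ/2πℤ)`. -/
def minusPart (F : ℝ → ℂ → ℂ) : ℝ → ℂ → ℂ := fun y p =>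
  ∑' n : ℕ, Complex.exp (-(Complex.I * ((n : ℂ) + 1) * p)) *
    ((2 * (Real.pi : ℂ))⁻¹ * ∫ q in (-Real.pi)..Real.pi,
      F y (q : ℂ) * Complex.exp (Complex.I * ((n : ℂ) + 1) * (q : ℂ)))

/-- Poisson bracket `{u,v} = ∂₁u ∂₂v - ∂₁v ∂₂u`. -/
def pois (u v : ℝ → ℂ → ℂ) : ℝ → ℂ → ℂ := fun y p =>
  D1 u y p * D2 v y p - D1 v y p * D2 u y p

/-- Truncation of the Moyal product to the first `k` orders of derivatives. -/
def moyalTrunc (k : ℕ) (ν : ℝ) (f g : ℝ → ℂ → ℂ) : ℝ → ℂ → ℂ := fun y p =>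
  ∑ j ∈ Finset.range k, ((Nat.factorial j : ℂ))⁻¹ * (Complex.I * (ν : ℂ) / 2) ^ j *
    ∑ i ∈ Finset.range (j + 1), (j.choose i : ℂ) * (-1) ^ (j - i) *
      (D1^[j - i] (D2^[i] f)) y p * (D1^[i] (D2^[j - i] g)) y p

/-- The second-order expansion of `log f₊ᴴ(ν) + log f₋ᴴ(ν)` (Corollary 4.5), `σ = σ_H`. -/
def whExp2 (σ : ℝ) (ν : ℝ) (g : ℝ → ℂ → ℂ) : ℝ → ℂ → ℂ := fun y p =>
  g y p + (Complex.I / 2) * (σ : ℂ) * (ν : ℂ) * pois (minusPart g) (plusPart g) y p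
    + ((ν : ℂ) ^ 2 / 8) *
      (2 * pois (plusPart g) (minusPart (pois (minusPart g) (plusPart g))) y p
        - 2 * pois (minusPart g) (plusPart (pois (minusPart g) (plusPart g))) y p
        - D2 (minusPart g) y p * pois (minusPart g) (D1 (plusPart g)) y p
        + D1 (minusPart g) y p * pois (minusPart g) (D2 (plusPart g)) y p
        - D1 (plusPart g) y p * pois (D2 (minusPart g)) (plusPart g) y p
        + D2 (plusPart g) y p * pois (D1 (minusPart g)) (plusPart g) y p
        - pois (D2 (minusPart g)) (D1 (plusPart g)) y p
        + pois (D1 (minusPart g)) (D2 (plusPart g)) y p)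

/-- The bidifferential operator `((∂_{φ₁}∂_{φ₂'} - ∂_{φ₂}∂_{φ₁'})/2)^N F(φ') R(φ)|_{φ'=φ}`. -/
def bidiff (N : ℕ) (F R : ℝ → ℂ → ℂ) : ℝ → ℂ → ℂ := fun y p =>
  ((1 : ℂ) / 2) ^ N * ∑ i ∈ Finset.range (N + 1), (N.choose i : ℂ) * (-1) ^ (N - i) *
    (D1^[N - i] (D2^[i] F)) y p * (D2^[N - i] (D1^[i] R)) y p

/-- Auxiliary family for the recursive definition of `R_m^{(ζ)}[f]`. -/
def RresAux (f : ℝ → ℂ → ℂ) (ζ : ℂ) : ℕ → ℕ → ℝ → ℂ → ℂ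
  | 0 => fun _ => fun y p => (ζ - f y p)⁻¹
  | m + 1 => fun n =>
      if n ≤ m then RresAux f ζ m n
      else fun y p => (ζ - f y p)⁻¹ *
        ∑ j ∈ Finset.range (m + 1),
          ((Nat.choose (2 * (m + 1)) (2 * j) : ℂ)) * (-1) ^ (m + 1 - j) *
            bidiff (2 * (m + 1 - j)) f (RresAux f ζ m j) y p

/-- The coefficients `R_m^{(ζ)}[f]` of the asymptotic expansion of the star resolvent. -/
def Rres (f : ℝ → ℂ → ℂ) (ζ : ℂ) (m : ℕ) : ℝ → ℂ → ℂ := RresAux f ζ m m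

/-- `E(c) = ∑_{k≥1} k (log c)_k (log c)_{-k}`. -/
def Efun (c : ℂ → ℂ) : ℂ :=
  ∑' k : ℕ, ((k : ℂ) + 1) * fCoef (fun z => Complex.log (c z)) ((k : ℤ) + 1) *
    fCoef (fun z => Complex.log (c z)) (-((k : ℤ) + 1))


-- ### Auxiliary development, part 1: geometric sums and Fourier coefficient decay
namespace LocAux

open Complex Metric intervalIntegral

lemma summable_geom_int {r : ℝ} (h0 : 0 ≤ r) (h1 : r < 1) :
    Summable (fun d : ℤ => r ^ d.natAbs) := by
  rw [summable_int_iff_summable_nat_and_neg]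
  constructor <;> simpa using summable_geometric_of_lt_one h0 h1

lemma norm_exp_I_mul_real (z : ℂ) (hz : z.re = 0) : ‖Complex.exp z‖ = 1 := by
  rw [Complex.norm_exp, hz, Real.exp_zero]

lemma mem_annulus {ρ : ℝ} (hρ0 : 0 < ρ) {s : ℝ} (hs1 : ρ < s) (hs2 : s < ρ⁻¹)
    {z : ℂ} (hz : ‖z‖ = s) : z ∈ annulus ρ := by
  constructor <;> simp only [hz] <;> assumption

lemma one_lt_inv' {ρ : ℝ} (hρ0 : 0 < ρ) (hρ1 : ρ < 1) : 1 < ρ⁻¹ :=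
  (one_lt_inv₀ hρ0).2 hρ1

/-- Contour shift: the weighted circle integrals agree on two radii inside the annulus. -/
lemma circleIntegral_eq {ρ : ℝ} (hρ0 : 0 < ρ) {f : ℂ → ℂ}
    (hf : AnalyticOnNhd ℂ f (annulus ρ)) (d : ℤ) {s t : ℝ}
    (hs : ρ < s) (hst : s ≤ t) (ht : t < ρ⁻¹) :
    (∮ z in C(0, t), f z * z ^ (-d - 1)) = ∮ z in C(0, s), f z * z ^ (-d - 1) := by
  have hs0 : 0 < s := lt_trans hρ0 hs
  have hsub : closedBall (0:ℂ) t \ ball (0:ℂ) s ⊆ annulus ρ := by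
    intro z hz
    obtain ⟨h1, h2⟩ := hz
    rw [mem_closedBall, dist_zero_right] at h1
    rw [mem_ball, dist_zero_right, not_lt] at h2
    exact ⟨lt_of_lt_of_le hs h2, lt_of_le_of_lt h1 ht⟩
  have hdiff : ∀ z ∈ annulus ρ, DifferentiableAt ℂ (fun z => f z * z ^ (-d - 1)) z := by
    intro z hz
    have hz0 : z ≠ 0 := by
      intro h
      rw [h] at hz
      exact absurd hz.1 (by simp [not_lt, hρ0.le])
    exact ((hf z hz).differentiableAt).mul
      ((differentiableAt_zpow.2 (Or.inl hz0)))
  refine Complex.circleIntegral_eq_of_differentiable_on_annulus_off_countable hs0 hst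
    Set.countable_empty ?_ ?_
  · exact fun z hz => ((hdiff z (hsub hz)).continuousAt).continuousWithinAt
  · intro z hz
    refine hdiff z (hsub ?_)
    exact ⟨ball_subset_closedBall hz.1.1, fun h => hz.1.2 (ball_subset_closedBall h)⟩

lemma circleIntegral_repr {ρ : ℝ} (hρ0 : 0 < ρ) (hρ1 : ρ < 1) {f : ℂ → ℂ}
    (hf : AnalyticOnNhd ℂ f (annulus ρ)) (d : ℤ) :
    fCoef f d = (2 * (Real.pi : ℂ) * I)⁻¹ * ∮ z in C(0, 1), f z * z ^ (-d - 1) := by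
  have hper : Function.Periodic
      (fun p : ℝ => f (Complex.exp (Complex.I * p)) * Complex.exp (-(Complex.I * d * p)))
      (2 * Real.pi) := by
    intro p
    have h1 : Complex.I * ((p + 2 * Real.pi : ℝ) : ℂ) = Complex.I * p + 2 * Real.pi * Complex.I := by
      push_cast; ring
    have h2 : -(Complex.I * d * ((p + 2 * Real.pi : ℝ) : ℂ))
        = -(Complex.I * d * p) + (-d : ℤ) * (2 * Real.pi * Complex.I) := by
      push_cast; ring
    simp only [h1, h2, Complex.exp_add, Complex.exp_int_mul_two_pi_mul_I,
      Complex.exp_two_pi_mul_I, mul_one]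
  have hshift : (∫ p in (-Real.pi)..Real.pi,
        f (Complex.exp (Complex.I * p)) * Complex.exp (-(Complex.I * d * p)))
      = ∫ p in (0:ℝ)..(2*Real.pi),
        f (Complex.exp (Complex.I * p)) * Complex.exp (-(Complex.I * d * p)) := by
    have h1 : (-Real.pi) + 2 * Real.pi = Real.pi := by ring
    have := hper.intervalIntegral_add_eq (-Real.pi) 0
    rw [h1, zero_add] at this
    exact this
  have hcirc : (∮ z in C(0, 1), f z * z ^ (-d - 1))
      = Complex.I * ∫ p in (0:ℝ)..(2*Real.pi),
          f (Complex.exp (Complex.I * p)) * Complex.exp (-(Complex.I * d * p)) := by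
    rw [circleIntegral, ← intervalIntegral.integral_const_mul]
    refine intervalIntegral.integral_congr fun θ _ => ?_
    have hmap : circleMap 0 1 θ = Complex.exp (Complex.I * θ) := by
      simp [circleMap, mul_comm]
    rw [deriv_circleMap, hmap, smul_eq_mul]
    have hzpow : (Complex.exp (Complex.I * θ)) ^ (-d - 1 : ℤ)
        = Complex.exp ((-d - 1 : ℤ) * (Complex.I * θ)) := by
      rw [Complex.exp_int_mul]
    rw [hzpow]
    rw [show Complex.exp (Complex.I * θ) * Complex.I *
        (f (Complex.exp (Complex.I * θ)) * Complex.exp ((-d - 1 : ℤ) * (Complex.I * θ)))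
        = Complex.I * (f (Complex.exp (Complex.I * θ)) *
          (Complex.exp (Complex.I * θ) * Complex.exp ((-d - 1 : ℤ) * (Complex.I * θ)))) by ring]
    rw [← Complex.exp_add]
    congr 2
    push_cast
    ring
  have hfc : fCoef f d = (2 * (Real.pi : ℂ))⁻¹ * ∫ p in (0:ℝ)..(2*Real.pi),
      f (Complex.exp (Complex.I * p)) * Complex.exp (-(Complex.I * d * p)) := by
    rw [fCoef, hshift]
  rw [hfc, hcirc]
  have hpi : (2 * (Real.pi : ℂ)) ≠ 0 := by
    simp [Real.pi_ne_zero]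
  field_simp
  congr 1; funext p; ring

lemma fCoef_decay {ρ M r : ℝ} (hρ0 : 0 < ρ) (hρ1 : ρ < 1) (hr1 : ρ < r) (hr2 : r < 1)
    {f : ℂ → ℂ} (hf : AnalyticOnNhd ℂ f (annulus ρ)) (hM : ∀ z ∈ annulus ρ, ‖f z‖ ≤ M)
    (d : ℤ) : ‖fCoef f d‖ ≤ M * r ^ d.natAbs := by
  have hr0 : 0 < r := lt_trans hρ0 hr1
  -- choose the radius s depending on the sign of d
  set s : ℝ := if 0 ≤ d then r⁻¹ else r with hs_def
  have hs0 : 0 < s := by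
    rw [hs_def]; split <;> [exact inv_pos.2 hr0; exact hr0]
  have hsρ : ρ < s := by
    rw [hs_def]; split
    · exact lt_trans hρ1 (one_lt_inv' hr0 hr2)
    · exact hr1
  have hsρ' : s < ρ⁻¹ := by
    rw [hs_def]; split
    · gcongr
    · exact lt_trans hr2 (one_lt_inv' hρ0 hρ1)
  have hM0 : 0 ≤ M := le_trans (norm_nonneg _) (hM 1 ⟨by simpa using hρ1, by simpa using one_lt_inv' hρ0 hρ1⟩)
  have key := circleIntegral_repr hρ0 hρ1 hf d
  have hflip : (∮ z in C(0, 1), f z * z ^ (-d - 1)) = ∮ z in C(0, s), f z * z ^ (-d - 1) := by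
    rcases le_or_gt s 1 with h | h
    · exact circleIntegral_eq hρ0 hf d hsρ h (one_lt_inv' hρ0 hρ1)
    · exact (circleIntegral_eq hρ0 hf d hρ1 h.le hsρ').symm
  have hb : ∀ z ∈ Metric.sphere (0:ℂ) s, ‖f z * z ^ (-d - 1)‖ ≤ M * s ^ (-d - 1 : ℤ) := by
    intro z hz
    have hzs : ‖z‖ = s := by
      exact mem_sphere_zero_iff_norm.1 hz
    rw [norm_mul, norm_zpow, mem_sphere_zero_iff_norm.1 hz]
    exact mul_le_mul_of_nonneg_right (hM z (mem_annulus hρ0 hsρ hsρ' hzs))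
      (zpow_nonneg hs0.le _)
  have hnc : ‖(2 * (Real.pi : ℂ) * I)⁻¹‖ = (2 * Real.pi)⁻¹ := by
    simp [Complex.norm_real, abs_of_pos Real.pi_pos]
  have h2π : (2 * Real.pi) ≠ 0 := by positivity
  have h1 : s * s ^ (-d - 1 : ℤ) = s ^ (-d : ℤ) := by
    rw [mul_comm, ← zpow_add_one₀ hs0.ne', sub_add_cancel]
  have hsd : s ^ (-d : ℤ) = r ^ d.natAbs := by
    rw [hs_def]; split
    case isTrue hd =>
      rw [inv_zpow', neg_neg, ← zpow_natCast r d.natAbs, Int.natAbs_of_nonneg hd]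
    case isFalse hd =>
      rw [← zpow_natCast r d.natAbs, Int.ofNat_natAbs_of_nonpos (by omega : d ≤ 0)]
  calc ‖fCoef f d‖ = ‖(2 * (Real.pi : ℂ) * I)⁻¹‖ * ‖∮ z in C(0, s), f z * z ^ (-d - 1)‖ := by
        rw [key, hflip, norm_mul]
    _ ≤ (2 * Real.pi)⁻¹ * (2 * Real.pi * s * (M * s ^ (-d - 1 : ℤ))) := by
        rw [hnc]
        exact mul_le_mul_of_nonneg_left
          (circleIntegral.norm_integral_le_of_norm_le_const hs0.le hb)
          (by positivity)
    _ = ((2 * Real.pi)⁻¹ * (2 * Real.pi)) * (M * (s * s ^ (-d - 1 : ℤ))) := by ring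
    _ = M * r ^ d.natAbs := by rw [inv_mul_cancel₀ h2π, one_mul, h1, hsd]

end LocAux
namespace LocAux

open Complex

lemma memV_decay {a : Symb} (ha : memV a) :
    ∃ M r : ℝ, 0 ≤ M ∧ 0 ≤ r ∧ r < 1 ∧ ∀ (x n : ℤ), ‖fCoef (a x) n‖ ≤ M * r ^ n.natAbs := by
  obtain ⟨ρ, ⟨hρ0, hρ1⟩, han, M, hM⟩ := ha
  have h1 : (1:ℂ) ∈ annulus ρ := by
    constructor <;> simp only [norm_one]
    · exact hρ1
    · exact one_lt_inv' hρ0 hρ1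
  refine ⟨M, (ρ + 1) / 2, le_trans (norm_nonneg _) (hM 0 1 h1), by linarith, by linarith,
    fun x n => ?_⟩
  exact fCoef_decay hρ0 hρ1 (by linarith) (by linarith) (han x) (fun z hz => hM x z hz) n

lemma Lmat_decay {a : Symb} {M r : ℝ}
    (hd : ∀ (x n : ℤ), ‖fCoef (a x) n‖ ≤ M * r ^ n.natAbs) (j k : ℤ) :
    ‖Lmat a j k‖ ≤ M * r ^ (j - k).natAbs := hd (j + k) (j - k)

lemma integral_exp_int (c : ℤ) :
    (∫ p in (-Real.pi)..Real.pi, Complex.exp (Complex.I * (c : ℂ) * (p : ℂ))) =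
      if c = 0 then (2 * (Real.pi : ℂ)) else 0 := by
  split
  case isTrue h =>
    subst h
    simp only [Int.cast_zero, mul_zero, zero_mul, Complex.exp_zero]
    rw [intervalIntegral.integral_const]
    rw [sub_neg_eq_add, Complex.real_smul]
    push_cast
    ring
  case isFalse h =>
    have hc : (Complex.I * (c : ℂ)) ≠ 0 :=
      mul_ne_zero Complex.I_ne_zero (Int.cast_ne_zero.2 h)
    rw [integral_exp_mul_complex hc]
    have harg : Complex.I * (c : ℂ) * ((Real.pi : ℝ) : ℂ)
        = Complex.I * (c : ℂ) * ((-Real.pi : ℝ) : ℂ) + (c : ℂ) * (2 * (Real.pi : ℂ) * Complex.I) := by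
      push_cast; ring
    rw [harg, Complex.exp_add]
    rw [show ((c:ℂ) * (2 * (Real.pi:ℂ) * Complex.I)) = ((c:ℤ):ℂ) * (2 * (Real.pi:ℂ) * Complex.I) by norm_num]
    rw [Complex.exp_int_mul_two_pi_mul_I, mul_one, sub_self, zero_div]

set_option maxHeartbeats 1000000 in
theorem hasSum_Lmat_starProd {a b : Symb} (ha : memV a) (hb : memV b) (j k : ℤ) :
    HasSum (fun l : ℤ => Lmat a j l * Lmat b l k) (Lmat (starProd a b) j k) := by
  classical
  obtain ⟨Ma, ra, hMa, hra0, hra1, hda⟩ := memV_decay ha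
  obtain ⟨Mb, rb, hMb, hrb0, hrb1, hdb⟩ := memV_decay hb
  set ca : ℤ × ℤ → ℂ := fun mn => fCoef (a (j + k + mn.1)) mn.2 with hca_def
  set cb : ℤ × ℤ → ℂ := fun mn => fCoef (b (j + k - mn.2)) mn.1 with hcb_def
  set bnd : ℤ × ℤ → ℝ := fun mn => (Mb * rb ^ mn.1.natAbs) * (Ma * ra ^ mn.2.natAbs) with hbnd_def
  have hbnd_sum : Summable bnd :=
    Summable.mul_of_nonneg ((summable_geom_int hrb0 hrb1).mul_left Mb)
      ((summable_geom_int hra0 hra1).mul_left Ma)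
      (fun _ => by positivity) (fun _ => by positivity)
  have hcabd : ∀ mn : ℤ × ℤ, ‖ca mn * cb mn‖ ≤ bnd mn := by
    intro mn
    rw [norm_mul, mul_comm]
    exact mul_le_mul (hdb _ _) (hda _ _) (norm_nonneg _) (by positivity)
  have hre : ∀ (q : ℤ) (p : ℝ), ((Complex.I * (q : ℂ) * (p : ℂ)).re) = 0 := by
    intro q p; simp
  have hre' : ∀ p : ℝ, ((Complex.I * (p : ℂ)).re) = 0 := by intro p; simp
  -- the term functions
  set F : ℤ × ℤ → ℝ → ℂ := fun mn p =>
    Complex.exp (Complex.I * ((mn.1 + mn.2 : ℤ) : ℂ) * (p : ℂ)) * ca mn * cb mn *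
      Complex.exp (-(Complex.I * (((j - k : ℤ)) : ℂ) * (p : ℂ))) with hF_def
  have hFnorm : ∀ mn p, ‖F mn p‖ = ‖ca mn * cb mn‖ := by
    intro mn p
    rw [hF_def]
    simp only [norm_mul]
    rw [norm_exp_I_mul_real _ (hre _ p), norm_exp_I_mul_real _ (by simp)]
    ring
  have hsum_int : HasSum (fun mn => ∫ p in (-Real.pi)..Real.pi, F mn p)
      (∫ p in (-Real.pi)..Real.pi,
        starProd a b (j + k) (Complex.exp (Complex.I * (p : ℂ))) *
          Complex.exp (-(Complex.I * (((j - k : ℤ)) : ℂ) * (p : ℂ)))) := by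
    apply intervalIntegral.hasSum_integral_of_dominated_convergence (fun mn (_ : ℝ) => bnd mn)
    · intro mn
      apply Continuous.aestronglyMeasurable
      rw [hF_def]
      fun_prop
    · intro mn
      filter_upwards with t _
      rw [hFnorm]; exact hcabd mn
    · filter_upwards with t _
      exact hbnd_sum
    · exact intervalIntegrable_const
    · filter_upwards with t _
      have hz : ∀ mn : ℤ × ℤ,
          (Complex.exp (Complex.I * (t : ℂ))) ^ (mn.1 + mn.2) * ca mn * cb mn *
            Complex.exp (-(Complex.I * (((j - k : ℤ)) : ℂ) * (t : ℂ))) = F mn t := by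
        intro mn
        rw [hF_def]
        congr 2
        have h1 : Complex.I * ((mn.1 + mn.2 : ℤ) : ℂ) * (t : ℂ)
            = ((mn.1 + mn.2 : ℤ) : ℂ) * (Complex.I * (t : ℂ)) := by ring
        rw [h1, Complex.exp_int_mul]
      have hsummable : Summable (fun mn : ℤ × ℤ =>
          (Complex.exp (Complex.I * (t : ℂ))) ^ (mn.1 + mn.2) * ca mn * cb mn) := by
        apply Summable.of_norm
        apply Summable.of_nonneg_of_le (fun _ => norm_nonneg _) _ hbnd_sum
        intro mn
        rw [norm_mul, norm_mul, norm_zpow, norm_exp_I_mul_real _ (hre' t), one_zpow, one_mul,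
          ← norm_mul]
        exact hcabd mn
      have := (hsummable.hasSum).mul_right
        (Complex.exp (-(Complex.I * (((j - k : ℤ)) : ℂ) * (t : ℂ))))
      simp only [hz] at this; exact this
  -- compute each term integral
  have hint : ∀ mn : ℤ × ℤ, (∫ p in (-Real.pi)..Real.pi, F mn p)
      = ca mn * cb mn * (if mn.1 + mn.2 - (j - k) = 0 then (2 * (Real.pi : ℂ)) else 0) := by
    intro mn
    have hptw : ∀ p : ℝ, F mn p = (ca mn * cb mn) *
        Complex.exp (Complex.I * ((mn.1 + mn.2 - (j - k) : ℤ) : ℂ) * (p : ℂ)) := by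
      intro p
      rw [hF_def]
      have h1 : Complex.exp (Complex.I * ((mn.1 + mn.2 : ℤ) : ℂ) * (p : ℂ)) *
          Complex.exp (-(Complex.I * (((j - k : ℤ)) : ℂ) * (p : ℂ)))
          = Complex.exp (Complex.I * ((mn.1 + mn.2 - (j - k) : ℤ) : ℂ) * (p : ℂ)) := by
        rw [← Complex.exp_add]
        congr 1
        push_cast
        ring
      calc Complex.exp (Complex.I * ((mn.1 + mn.2 : ℤ) : ℂ) * (p : ℂ)) * ca mn * cb mn *
            Complex.exp (-(Complex.I * (((j - k : ℤ)) : ℂ) * (p : ℂ)))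
          = (ca mn * cb mn) * (Complex.exp (Complex.I * ((mn.1 + mn.2 : ℤ) : ℂ) * (p : ℂ)) *
            Complex.exp (-(Complex.I * (((j - k : ℤ)) : ℂ) * (p : ℂ)))) := by ring
        _ = _ := by rw [h1]
    rw [intervalIntegral.integral_congr (fun p _ => hptw p),
      intervalIntegral.integral_const_mul, integral_exp_int]
  -- assemble
  have h2π : (2 * (Real.pi : ℂ)) ≠ 0 := by
    simp [Real.pi_ne_zero]
  have h2 : HasSum (fun mn : ℤ × ℤ => (2 * (Real.pi : ℂ))⁻¹ *
      (∫ p in (-Real.pi)..Real.pi, F mn p)) (Lmat (starProd a b) j k) := by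
    exact hsum_int.mul_left _
  have hfun : (fun mn : ℤ × ℤ => (2 * (Real.pi : ℂ))⁻¹ * ∫ p in (-Real.pi)..Real.pi, F mn p)
      = fun mn : ℤ × ℤ => if mn.1 + mn.2 = j - k then ca mn * cb mn else 0 := by
    funext mn
    rw [hint mn]
    by_cases h : mn.1 + mn.2 = j - k
    · rw [if_pos (show mn.1 + mn.2 - (j - k) = 0 by omega), if_pos h]
      rw [mul_comm (ca mn * cb mn), ← mul_assoc, inv_mul_cancel₀ h2π, one_mul]
    · rw [if_neg (by omega), if_neg h, mul_zero, mul_zero]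
  rw [hfun] at h2
  -- reindex from ℤ × ℤ to ℤ
  set g : ℤ → ℤ × ℤ := fun l => (l - k, j - l) with hg_def
  have hginj : Function.Injective g := by
    intro l1 l2 h
    have := congrArg Prod.fst h
    simp only [hg_def] at this
    omega
  have hsupp : ∀ mn : ℤ × ℤ, mn ∉ Set.range g →
      (if mn.1 + mn.2 = j - k then ca mn * cb mn else 0) = 0 := by
    intro mn hmn
    apply if_neg
    intro h
    refine hmn ⟨mn.1 + k, Prod.ext_iff.2 ⟨?_, ?_⟩⟩ <;> simp only [hg_def] <;> omega
  have key : (fun l : ℤ => Lmat a j l * Lmat b l k)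
      = fun l => (fun mn : ℤ × ℤ => if mn.1 + mn.2 = j - k then ca mn * cb mn else 0) (g l) := by
    funext l
    show Lmat a j l * Lmat b l k
      = if (l - k) + (j - l) = j - k then ca (l - k, j - l) * cb (l - k, j - l) else 0
    rw [if_pos (by ring)]
    simp only [hca_def, hcb_def]
    have hc1 : j + k + (l - k) = j + l := by ring
    have hc2 : j + k - (j - l) = l + k := by ring
    rw [hc1, hc2, Lmat, Lmat]
  rw [key]
  exact (Function.Injective.hasSum_iff hginj hsupp).2 h2

end LocAux
namespace LocAux

/-- The defining set of `matOpNorm` (for `ℤ`-indexed matrices). -/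
def opSet (A : ℤ → ℤ → ℂ) : Set ℝ :=
  {C : ℝ | 0 ≤ C ∧ ∀ v : ℤ →₀ ℂ,
    ∑' j : ℤ, ‖∑ k ∈ v.support, A j k * v k‖ ^ 2 ≤ C ^ 2 * ∑ k ∈ v.support, ‖v k‖ ^ 2}

lemma matOpNorm_eq (A : ℤ → ℤ → ℂ) : matOpNorm A = sInf (opSet A) := rfl

lemma opSet_bddBelow (A : ℤ → ℤ → ℂ) : BddBelow (opSet A) := ⟨0, fun _ hC => hC.1⟩

lemma matOpNorm_nonneg' (A : ℤ → ℤ → ℂ) : 0 ≤ matOpNorm A :=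
  Real.sInf_nonneg fun _ hC => hC.1

lemma matOpNorm_le {A : ℤ → ℤ → ℂ} {C : ℝ} (h : C ∈ opSet A) : matOpNorm A ≤ C :=
  csInf_le (opSet_bddBelow A) h

lemma opSet_isClosed (A : ℤ → ℤ → ℂ) : IsClosed (opSet A) := by
  have heq : opSet A = {C : ℝ | 0 ≤ C} ∩ ⋂ v : ℤ →₀ ℂ,
      {C : ℝ | ∑' j : ℤ, ‖∑ k ∈ v.support, A j k * v k‖ ^ 2
        ≤ C ^ 2 * ∑ k ∈ v.support, ‖v k‖ ^ 2} := by
    ext C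
    simp only [opSet, Set.mem_setOf_eq, Set.mem_inter_iff, Set.mem_iInter]
  rw [heq]
  refine (isClosed_le continuous_const continuous_id).inter (isClosed_iInter fun v => ?_)
  exact isClosed_le continuous_const ((continuous_pow 2).mul continuous_const)

lemma matOpNorm_mem {A : ℤ → ℤ → ℂ} (h : (opSet A).Nonempty) : matOpNorm A ∈ opSet A :=
  (opSet_isClosed A).csInf_mem h (opSet_bddBelow A)

lemma summable_geom_shift {r : ℝ} (h0 : 0 ≤ r) (h1 : r < 1) (k : ℤ) :
    Summable (fun j : ℤ => r ^ (j - k).natAbs) := by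
  have h := (summable_geom_int h0 h1).comp_injective (i := fun j : ℤ => j - k)
    sub_left_injective
  exact h

lemma tsum_geom_shift (r : ℝ) (k : ℤ) :
    ∑' j : ℤ, r ^ (j - k).natAbs = ∑' d : ℤ, r ^ d.natAbs := by
  have h := (Equiv.subRight k).tsum_eq (fun d : ℤ => r ^ d.natAbs)
  simpa [Equiv.subRight] using h

lemma summable_geom_shift' {r : ℝ} (h0 : 0 ≤ r) (h1 : r < 1) (j : ℤ) :
    Summable (fun k : ℤ => r ^ (j - k).natAbs) := by
  have h := (summable_geom_int h0 h1).comp_injective (i := fun k : ℤ => j - k)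
    sub_right_injective
  exact h

lemma tsum_geom_shift' (r : ℝ) (j : ℤ) :
    ∑' k : ℤ, r ^ (j - k).natAbs = ∑' d : ℤ, r ^ d.natAbs := by
  have h := (Equiv.subLeft j).tsum_eq (fun d : ℤ => r ^ d.natAbs)
  simpa [Equiv.subLeft] using h

lemma row_bound {A : ℤ → ℤ → ℂ} {M r : ℝ}
    (hA : ∀ j k, ‖A j k‖ ≤ M * r ^ (j - k).natAbs) (w : ℤ →₀ ℂ) (j : ℤ) :
    ‖∑ k ∈ w.support, A j k * w k‖ ≤ ∑ k ∈ w.support, M * r ^ (j - k).natAbs * ‖w k‖ :=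
  (norm_sum_le _ _).trans (Finset.sum_le_sum fun k _ => by
    rw [norm_mul]; exact mul_le_mul_of_nonneg_right (hA j k) (norm_nonneg _))

lemma summable_weight {r : ℝ} (hr0 : 0 ≤ r) (hr1 : r < 1) (M : ℝ) (s : Finset ℤ) (c : ℤ → ℝ) :
    Summable (fun j : ℤ => ∑ k ∈ s, M * r ^ (j - k).natAbs * c k) := by
  refine summable_sum fun k _ => ?_
  simpa only [mul_assoc] using ((summable_geom_shift hr0 hr1 k).mul_left M).mul_right (c k)

lemma summable_row_sq {A : ℤ → ℤ → ℂ} {M r : ℝ} (hM : 0 ≤ M) (hr0 : 0 ≤ r) (hr1 : r < 1)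
    (hA : ∀ j k, ‖A j k‖ ≤ M * r ^ (j - k).natAbs) (w : ℤ →₀ ℂ) :
    Summable (fun j : ℤ => ‖∑ k ∈ w.support, A j k * w k‖ ^ 2) := by
  set C := ∑ k ∈ w.support, M * ‖w k‖ with hC
  have hφs : Summable (fun j : ℤ => ∑ k ∈ w.support, M * r ^ (j - k).natAbs * ‖w k‖) :=
    summable_weight hr0 hr1 M w.support _
  refine Summable.of_nonneg_of_le (fun j => by positivity) (fun j => ?_) (hφs.mul_left C)
  have hφ0 : 0 ≤ ∑ k ∈ w.support, M * r ^ (j - k).natAbs * ‖w k‖ :=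
    Finset.sum_nonneg fun k _ => by positivity
  have h1 := row_bound hA w j
  have h2 : (∑ k ∈ w.support, M * r ^ (j - k).natAbs * ‖w k‖) ≤ C := by
    refine Finset.sum_le_sum fun k _ => ?_
    exact mul_le_mul_of_nonneg_right
      (by nlinarith [pow_le_one₀ hr0 hr1.le (n := (j - k).natAbs),
        pow_nonneg hr0 (j - k).natAbs]) (norm_nonneg _)
  calc ‖∑ k ∈ w.support, A j k * w k‖ ^ 2
      ≤ (∑ k ∈ w.support, M * r ^ (j - k).natAbs * ‖w k‖) ^ 2 :=
        pow_le_pow_left₀ (norm_nonneg _) h1 2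
    _ = (∑ k ∈ w.support, M * r ^ (j - k).natAbs * ‖w k‖) *
        (∑ k ∈ w.support, M * r ^ (j - k).natAbs * ‖w k‖) := sq _
    _ ≤ C * (∑ k ∈ w.support, M * r ^ (j - k).natAbs * ‖w k‖) :=
        mul_le_mul_of_nonneg_right h2 hφ0

/-- Schur test: a matrix with geometrically decaying entries is bounded. -/
lemma schur_mem {A : ℤ → ℤ → ℂ} {M r : ℝ} (hM : 0 ≤ M) (hr0 : 0 ≤ r) (hr1 : r < 1)
    (hA : ∀ j k, ‖A j k‖ ≤ M * r ^ (j - k).natAbs) :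
    (M * ∑' d : ℤ, r ^ d.natAbs) ∈ opSet A := by
  classical
  have hT0 : 0 ≤ ∑' d : ℤ, r ^ d.natAbs := tsum_nonneg fun d => by positivity
  set K := M * ∑' d : ℤ, r ^ d.natAbs with hK
  have hK0 : 0 ≤ K := mul_nonneg hM hT0
  refine ⟨hK0, fun v => ?_⟩
  set s := v.support with hs
  have hrow : ∀ j : ℤ, ‖∑ k ∈ s, A j k * v k‖ ^ 2
      ≤ K * ∑ k ∈ s, M * r ^ (j - k).natAbs * ‖v k‖ ^ 2 := by
    intro j
    have h1 := row_bound hA v j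
    have hw0 : ∀ k : ℤ, 0 ≤ M * r ^ (j - k).natAbs := fun k => by positivity
    have hCS := Finset.sum_mul_sq_le_sq_mul_sq s
      (fun k => Real.sqrt (M * r ^ (j - k).natAbs))
      (fun k => Real.sqrt (M * r ^ (j - k).natAbs) * ‖v k‖)
    have hsq : ∀ k : ℤ, Real.sqrt (M * r ^ (j - k).natAbs) *
        (Real.sqrt (M * r ^ (j - k).natAbs) * ‖v k‖) = M * r ^ (j - k).natAbs * ‖v k‖ := by
      intro k
      rw [← mul_assoc, Real.mul_self_sqrt (hw0 k)]
    have hsq2 : ∀ k : ℤ, (Real.sqrt (M * r ^ (j - k).natAbs)) ^ 2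
        = M * r ^ (j - k).natAbs := fun k => Real.sq_sqrt (hw0 k)
    have hsq3 : ∀ k : ℤ, (Real.sqrt (M * r ^ (j - k).natAbs) * ‖v k‖) ^ 2
        = M * r ^ (j - k).natAbs * ‖v k‖ ^ 2 := by
      intro k
      rw [mul_pow, hsq2 k]
    rw [Finset.sum_congr rfl (fun k _ => hsq k)] at hCS
    rw [Finset.sum_congr rfl (fun k _ => hsq2 k), Finset.sum_congr rfl (fun k _ => hsq3 k)] at hCS
    have hsumw : (∑ k ∈ s, M * r ^ (j - k).natAbs) ≤ K := by
      have hsummable : Summable (fun k : ℤ => M * r ^ (j - k).natAbs) :=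
        (summable_geom_shift' hr0 hr1 j).mul_left M
      refine (Summable.sum_le_tsum s (fun k _ => hw0 k) hsummable).trans ?_
      rw [tsum_mul_left, tsum_geom_shift' r j]
    have hvn : 0 ≤ ∑ k ∈ s, M * r ^ (j - k).natAbs * ‖v k‖ ^ 2 :=
      Finset.sum_nonneg fun k _ => by positivity
    calc ‖∑ k ∈ s, A j k * v k‖ ^ 2
        ≤ (∑ k ∈ s, M * r ^ (j - k).natAbs * ‖v k‖) ^ 2 :=
          pow_le_pow_left₀ (norm_nonneg _) h1 2
      _ ≤ (∑ k ∈ s, M * r ^ (j - k).natAbs) * ∑ k ∈ s, M * r ^ (j - k).natAbs * ‖v k‖ ^ 2 := hCS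
      _ ≤ K * ∑ k ∈ s, M * r ^ (j - k).natAbs * ‖v k‖ ^ 2 :=
          mul_le_mul_of_nonneg_right hsumw hvn
  have hRsum : Summable (fun j : ℤ => K * ∑ k ∈ s, M * r ^ (j - k).natAbs * ‖v k‖ ^ 2) :=
    (summable_weight hr0 hr1 M s _).mul_left K
  have hLsum : Summable (fun j : ℤ => ‖∑ k ∈ s, A j k * v k‖ ^ 2) :=
    summable_row_sq hM hr0 hr1 hA v
  have hswap : ∑' j : ℤ, ∑ k ∈ s, M * r ^ (j - k).natAbs * ‖v k‖ ^ 2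
      = ∑ k ∈ s, ∑' j : ℤ, M * r ^ (j - k).natAbs * ‖v k‖ ^ 2 :=
    Summable.tsum_finsetSum fun k _ => by
      simpa only [mul_assoc] using
        ((summable_geom_shift hr0 hr1 k).mul_left M).mul_right (‖v k‖ ^ 2)
  have hinner : ∀ k : ℤ, ∑' j : ℤ, M * r ^ (j - k).natAbs * ‖v k‖ ^ 2 = K * ‖v k‖ ^ 2 := by
    intro k
    calc ∑' j : ℤ, M * r ^ (j - k).natAbs * ‖v k‖ ^ 2
        = ∑' j : ℤ, r ^ (j - k).natAbs * (M * ‖v k‖ ^ 2) := tsum_congr fun j => by ring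
      _ = (∑' j : ℤ, r ^ (j - k).natAbs) * (M * ‖v k‖ ^ 2) := tsum_mul_right
      _ = K * ‖v k‖ ^ 2 := by rw [tsum_geom_shift r k, hK]; ring
  calc ∑' j : ℤ, ‖∑ k ∈ s, A j k * v k‖ ^ 2
      ≤ ∑' j : ℤ, K * ∑ k ∈ s, M * r ^ (j - k).natAbs * ‖v k‖ ^ 2 :=
        Summable.tsum_le_tsum hrow hLsum hRsum
    _ = K * ∑' j : ℤ, ∑ k ∈ s, M * r ^ (j - k).natAbs * ‖v k‖ ^ 2 := tsum_mul_left
    _ = K * ∑ k ∈ s, ∑' j : ℤ, M * r ^ (j - k).natAbs * ‖v k‖ ^ 2 := by rw [hswap]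
    _ = K * ∑ k ∈ s, K * ‖v k‖ ^ 2 := by
        rw [Finset.sum_congr rfl fun k _ => hinner k]
    _ = K ^ 2 * ∑ k ∈ s, ‖v k‖ ^ 2 := by rw [← Finset.mul_sum]; ring

/-- ℓ²-triangle inequality over a finite window. -/
lemma l2_add_bound (J : Finset ℤ) (f g : ℤ → ℂ) {aa bb : ℝ} (ha : 0 ≤ aa) (hb : 0 ≤ bb)
    (hf : ∑ j ∈ J, ‖f j‖ ^ 2 ≤ aa ^ 2) (hg : ∑ j ∈ J, ‖g j‖ ^ 2 ≤ bb ^ 2) :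
    ∑ j ∈ J, ‖f j + g j‖ ^ 2 ≤ (aa + bb) ^ 2 := by
  classical
  set F : EuclideanSpace ℂ {x // x ∈ J} := WithLp.toLp 2 (fun i => f i.1) with hF
  set G : EuclideanSpace ℂ {x // x ∈ J} := WithLp.toLp 2 (fun i => g i.1) with hG
  have hnorm : ∀ (h : ℤ → ℂ) (H : EuclideanSpace ℂ {x // x ∈ J}), (∀ i, H i = h i.1) →
      ‖H‖ = Real.sqrt (∑ j ∈ J, ‖h j‖ ^ 2) := by
    intro h H hH
    rw [EuclideanSpace.norm_eq]
    congr 1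
    rw [← Finset.sum_coe_sort J (fun j => ‖h j‖ ^ 2)]
    exact Finset.sum_congr rfl fun i _ => by rw [hH i]
  have hFn : ‖F‖ ≤ aa := by
    rw [hnorm f F (fun i => rfl)]
    calc Real.sqrt (∑ j ∈ J, ‖f j‖ ^ 2) ≤ Real.sqrt (aa ^ 2) := Real.sqrt_le_sqrt hf
      _ = aa := Real.sqrt_sq ha
  have hGn : ‖G‖ ≤ bb := by
    rw [hnorm g G (fun i => rfl)]
    calc Real.sqrt (∑ j ∈ J, ‖g j‖ ^ 2) ≤ Real.sqrt (bb ^ 2) := Real.sqrt_le_sqrt hg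
      _ = bb := Real.sqrt_sq hb
  have hFG : ‖F + G‖ = Real.sqrt (∑ j ∈ J, ‖f j + g j‖ ^ 2) :=
    hnorm (fun j => f j + g j) (F + G) (fun i => rfl)
  have h1 : Real.sqrt (∑ j ∈ J, ‖f j + g j‖ ^ 2) ≤ aa + bb := by
    rw [← hFG]
    exact (norm_add_le F G).trans (add_le_add hFn hGn)
  have h2 : 0 ≤ ∑ j ∈ J, ‖f j + g j‖ ^ 2 := Finset.sum_nonneg fun j _ => by positivity
  calc ∑ j ∈ J, ‖f j + g j‖ ^ 2 = (Real.sqrt (∑ j ∈ J, ‖f j + g j‖ ^ 2)) ^ 2 :=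
        (Real.sq_sqrt h2).symm
    _ ≤ (aa + bb) ^ 2 := pow_le_pow_left₀ (Real.sqrt_nonneg _) h1 2

/-- Key composition estimate through a (possibly infinite) intermediate vector. -/
lemma core_bound (X U : ℤ → ℤ → ℂ) {CX CU : ℝ} (J : Finset ℤ) (v : ℤ →₀ ℂ)
    (hX : CX ∈ opSet X) (hU : CU ∈ opSet U) (u : ℤ → ℂ)
    (hu : ∀ l, u l = ∑ k ∈ v.support, U l k * v k)
    (husq : Summable fun l => ‖u l‖ ^ 2)
    (hXu : ∀ j, Summable fun l => X j l * u l)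
    (hXsq : ∀ w : ℤ →₀ ℂ, Summable fun j => ‖∑ k ∈ w.support, X j k * w k‖ ^ 2) :
    ∑ j ∈ J, ‖∑' l : ℤ, X j l * u l‖ ^ 2 ≤ (CX * CU) ^ 2 * ∑ k ∈ v.support, ‖v k‖ ^ 2 := by
  classical
  have hUsum : ∑' l : ℤ, ‖u l‖ ^ 2 ≤ CU ^ 2 * ∑ k ∈ v.support, ‖v k‖ ^ 2 := by
    calc ∑' l : ℤ, ‖u l‖ ^ 2 = ∑' l : ℤ, ‖∑ k ∈ v.support, U l k * v k‖ ^ 2 :=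
          tsum_congr fun l => by rw [hu]
      _ ≤ CU ^ 2 * ∑ k ∈ v.support, ‖v k‖ ^ 2 := hU.2 v
  have key : ∀ L : Finset ℤ, ∑ j ∈ J, ‖∑ l ∈ L, X j l * u l‖ ^ 2
      ≤ (CX * CU) ^ 2 * ∑ k ∈ v.support, ‖v k‖ ^ 2 := by
    intro L
    set w : ℤ →₀ ℂ := Finsupp.onFinset L (fun l => if l ∈ L then u l else 0)
      (fun l h => by by_contra hc; simp [hc] at h) with hw
    have hwsub : w.support ⊆ L := Finsupp.support_onFinset_subset
    have hwval : ∀ l ∈ L, w l = u l := fun l hl => by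
      simp only [hw, Finsupp.onFinset_apply, if_pos hl]
    have hterm : ∀ j : ℤ, ∑ k ∈ w.support, X j k * w k = ∑ l ∈ L, X j l * u l := by
      intro j
      rw [Finset.sum_subset hwsub (fun l _ hns => by
        rw [Finsupp.notMem_support_iff.1 hns, mul_zero])]
      exact Finset.sum_congr rfl fun l hl => by rw [hwval l hl]
    calc ∑ j ∈ J, ‖∑ l ∈ L, X j l * u l‖ ^ 2
        = ∑ j ∈ J, ‖∑ k ∈ w.support, X j k * w k‖ ^ 2 :=
          Finset.sum_congr rfl fun j _ => by rw [hterm j]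
      _ ≤ ∑' j : ℤ, ‖∑ k ∈ w.support, X j k * w k‖ ^ 2 :=
          Summable.sum_le_tsum J (fun _ _ => by positivity) (hXsq w)
      _ ≤ CX ^ 2 * ∑ k ∈ w.support, ‖w k‖ ^ 2 := hX.2 w
      _ ≤ CX ^ 2 * ∑' l : ℤ, ‖u l‖ ^ 2 := by
          refine mul_le_mul_of_nonneg_left ?_ (by positivity)
          rw [Finset.sum_congr rfl fun k hk => by rw [hwval k (hwsub hk)]]
          exact Summable.sum_le_tsum _ (fun _ _ => by positivity) husq
      _ ≤ CX ^ 2 * (CU ^ 2 * ∑ k ∈ v.support, ‖v k‖ ^ 2) :=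
          mul_le_mul_of_nonneg_left hUsum (by positivity)
      _ = (CX * CU) ^ 2 * ∑ k ∈ v.support, ‖v k‖ ^ 2 := by ring
  have htend : Filter.Tendsto (fun L : Finset ℤ => ∑ j ∈ J, ‖∑ l ∈ L, X j l * u l‖ ^ 2)
      Filter.atTop (nhds (∑ j ∈ J, ‖∑' l : ℤ, X j l * u l‖ ^ 2)) := by
    refine tendsto_finset_sum J fun j _ => ?_
    exact ((continuous_norm.pow 2).tendsto _).comp (hXu j).hasSum
  exact le_of_tendsto htend (Filter.Eventually.of_forall key)

end LocAux
namespace LocAux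

lemma PAP_decay {A : ℤ → ℤ → ℂ} {M r : ℝ} (hM : 0 ≤ M) (hr0 : 0 ≤ r)
    (hA : ∀ j k, ‖A j k‖ ≤ M * r ^ (j - k).natAbs) (n : ℕ) (j k : ℤ) :
    ‖PAP n A j k‖ ≤ M * r ^ (j - k).natAbs := by
  unfold PAP; split
  · exact hA j k
  · simp only [norm_zero]; positivity

lemma PAQ_decay {A : ℤ → ℤ → ℂ} {M r : ℝ} (hM : 0 ≤ M) (hr0 : 0 ≤ r)
    (hA : ∀ j k, ‖A j k‖ ≤ M * r ^ (j - k).natAbs) (n m : ℕ) (j k : ℤ) :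
    ‖PAQ n m A j k‖ ≤ M * r ^ (j - k).natAbs := by
  unfold PAQ; split
  · exact hA j k
  · simp only [norm_zero]; positivity

lemma QAP_decay {A : ℤ → ℤ → ℂ} {M r : ℝ} (hM : 0 ≤ M) (hr0 : 0 ≤ r)
    (hA : ∀ j k, ‖A j k‖ ≤ M * r ^ (j - k).natAbs) (m n : ℕ) (j k : ℤ) :
    ‖QAP m n A j k‖ ≤ M * r ^ (j - k).natAbs := by
  unfold QAP; split
  · exact hA j k
  · simp only [norm_zero]; positivity

lemma u_bound {B : ℤ → ℤ → ℂ} {M r : ℝ} (hM : 0 ≤ M) (hr0 : 0 ≤ r) (hr1 : r < 1)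
    (hB : ∀ j k, ‖B j k‖ ≤ M * r ^ (j - k).natAbs) (v : ℤ →₀ ℂ) (l : ℤ) :
    ‖∑ k ∈ v.support, B l k * v k‖ ≤ ∑ k ∈ v.support, M * ‖v k‖ :=
  (row_bound hB v l).trans (Finset.sum_le_sum fun k _ =>
    mul_le_mul_of_nonneg_right
      (by nlinarith [pow_le_one₀ hr0 hr1.le (n := (l - k).natAbs),
        pow_nonneg hr0 (l - k).natAbs])
      (norm_nonneg _))

lemma summable_X_u {X : ℤ → ℤ → ℂ} {M r : ℝ} (hr0 : 0 ≤ r) (hr1 : r < 1)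
    (hX : ∀ j k, ‖X j k‖ ≤ M * r ^ (j - k).natAbs)
    {u : ℤ → ℂ} {Cu : ℝ} (hu : ∀ l, ‖u l‖ ≤ Cu) (j : ℤ) :
    Summable fun l : ℤ => X j l * u l := by
  apply Summable.of_norm
  refine Summable.of_nonneg_of_le (fun l => norm_nonneg _) (fun l => ?_)
    (((summable_geom_shift' hr0 hr1 j).mul_left M).mul_right Cu)
  rw [norm_mul]
  exact mul_le_mul (hX j l) (hu l) (norm_nonneg _) (le_trans (norm_nonneg _) (hX j l))

/-- Per-window bound, left factorization: `‖P̃ₙ L(a⋆b) P̃ₙ‖ ≤ (‖P̃ₙ₊ₘ L(a) P̃ₙ₊ₘ‖ + ‖P̃ₙ L(a) Q̃ₙ₊ₘ‖) ‖L(b)‖`. -/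
lemma pap_bound_left {a b : Symb} {Ma ra Mb rb : ℝ}
    (hMa : 0 ≤ Ma) (hra0 : 0 ≤ ra) (hra1 : ra < 1)
    (hMb : 0 ≤ Mb) (hrb0 : 0 ≤ rb) (hrb1 : rb < 1)
    (hdA : ∀ j k, ‖Lmat a j k‖ ≤ Ma * ra ^ (j - k).natAbs)
    (hdB : ∀ j k, ‖Lmat b j k‖ ≤ Mb * rb ^ (j - k).natAbs)
    (hC : ∀ j k : ℤ, HasSum (fun l : ℤ => Lmat a j l * Lmat b l k) (Lmat (starProd a b) j k))
    (n m : ℕ) :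
    matOpNorm (PAP n (Lmat (starProd a b)))
      ≤ (matOpNorm (PAP (n + m) (Lmat a)) + matOpNorm (PAQ n (n + m) (Lmat a)))
        * matOpNorm (Lmat b) := by
  classical
  set A := Lmat a with hA_def
  set B := Lmat b with hB_def
  set Cm := Lmat (starProd a b) with hCm_def
  set X1 := PAP (n + m) A with hX1d
  set X2 := PAQ n (n + m) A with hX2d
  have hdX1 : ∀ j k, ‖X1 j k‖ ≤ Ma * ra ^ (j - k).natAbs := PAP_decay hMa hra0 hdA (n + m)
  have hdX2 : ∀ j k, ‖X2 j k‖ ≤ Ma * ra ^ (j - k).natAbs := PAQ_decay hMa hra0 hdA n (n + m)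
  have hX1mem : matOpNorm X1 ∈ opSet X1 := matOpNorm_mem ⟨_, schur_mem hMa hra0 hra1 hdX1⟩
  have hX2mem : matOpNorm X2 ∈ opSet X2 := matOpNorm_mem ⟨_, schur_mem hMa hra0 hra1 hdX2⟩
  have hBmem : matOpNorm B ∈ opSet B := matOpNorm_mem ⟨_, schur_mem hMb hrb0 hrb1 hdB⟩
  set CX1 := matOpNorm X1 with hCX1
  set CX2 := matOpNorm X2 with hCX2
  set CB := matOpNorm B with hCB
  refine matOpNorm_le ⟨mul_nonneg (add_nonneg hX1mem.1 hX2mem.1) hBmem.1, fun v => ?_⟩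
  set p : ℤ → Prop := fun k => |k| ≤ (n : ℤ) with hp
  set v' : ℤ →₀ ℂ := v.filter p with hv'
  have hv'supp : v'.support = v.support.filter p := by
    rw [hv', Finsupp.support_filter]
  have hv'val : ∀ k ∈ v'.support, v' k = v k := by
    intro k hk
    rw [hv'supp, Finset.mem_filter] at hk
    rw [hv', Finsupp.filter_apply, if_pos hk.2]
  have hv'absle : ∀ k ∈ v'.support, |k| ≤ (n : ℤ) := fun k hk => by
    rw [hv'supp, Finset.mem_filter] at hk; exact hk.2
  set u : ℤ → ℂ := fun l => ∑ k ∈ v'.support, B l k * v' k with hu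
  set Cu : ℝ := ∑ k ∈ v'.support, Mb * ‖v' k‖ with hCu
  have hubd : ∀ l, ‖u l‖ ≤ Cu := fun l => u_bound hMb hrb0 hrb1 hdB v' l
  have husq : Summable fun l : ℤ => ‖u l‖ ^ 2 := summable_row_sq hMb hrb0 hrb1 hdB v'
  have hX1u : ∀ j, Summable fun l : ℤ => X1 j l * u l :=
    fun j => summable_X_u hra0 hra1 hdX1 hubd j
  have hX2u : ∀ j, Summable fun l : ℤ => X2 j l * u l :=
    fun j => summable_X_u hra0 hra1 hdX2 hubd j
  have hdecomp : ∀ j : ℤ, |j| ≤ (n : ℤ) →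
      ∑ k ∈ v.support, PAP n Cm j k * v k
        = (∑' l : ℤ, X1 j l * u l) + ∑' l : ℤ, X2 j l * u l := by
    intro j hj
    have step1 : ∑ k ∈ v.support, PAP n Cm j k * v k = ∑ k ∈ v'.support, Cm j k * v' k := by
      calc ∑ k ∈ v.support, PAP n Cm j k * v k
          = ∑ k ∈ v.support, (if p k then Cm j k * v k else 0) := by
            refine Finset.sum_congr rfl fun k _ => ?_
            simp only [PAP, hp]
            by_cases h : |k| ≤ (n : ℤ)
            · rw [if_pos ⟨hj, h⟩, if_pos h]
            · rw [if_neg (fun hc => h hc.2), if_neg h, zero_mul]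
        _ = ∑ k ∈ v.support.filter p, Cm j k * v k := (Finset.sum_filter _ _).symm
        _ = ∑ k ∈ v'.support, Cm j k * v' k := by
            rw [hv'supp]
            refine Finset.sum_congr rfl fun k hk => ?_
            rw [hv', Finsupp.filter_apply, if_pos (Finset.mem_filter.1 hk).2]
    have step2 : ∑ k ∈ v'.support, Cm j k * v' k = ∑' l : ℤ, A j l * u l := by
      calc ∑ k ∈ v'.support, Cm j k * v' k
          = ∑ k ∈ v'.support, ∑' l : ℤ, A j l * B l k * v' k :=
            Finset.sum_congr rfl fun k _ => (((hC j k).mul_right (v' k)).tsum_eq).symm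
        _ = ∑' l : ℤ, ∑ k ∈ v'.support, A j l * B l k * v' k :=
            (Summable.tsum_finsetSum fun k _ => (hC j k).summable.mul_right (v' k)).symm
        _ = ∑' l : ℤ, A j l * u l := by
            refine tsum_congr fun l => ?_
            rw [hu, Finset.mul_sum]
            exact Finset.sum_congr rfl fun k _ => by ring
    have hpt : ∀ l : ℤ, A j l * u l = X1 j l * u l + X2 j l * u l := by
      intro l
      have hj' : |j| ≤ ((n + m : ℕ) : ℤ) := le_trans hj (by exact_mod_cast Nat.le_add_right n m)
      simp only [hX1d, hX2d, PAP, PAQ]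
      by_cases h : |l| ≤ ((n + m : ℕ) : ℤ)
      · rw [if_pos ⟨hj', h⟩, if_neg (fun hc => hc.2 h), zero_mul, add_zero]
      · rw [if_neg (fun hc => h hc.2), if_pos ⟨hj, h⟩, zero_mul, zero_add]
    rw [step1, step2]
    calc ∑' l : ℤ, A j l * u l = ∑' l : ℤ, (X1 j l * u l + X2 j l * u l) := tsum_congr hpt
      _ = _ := Summable.tsum_add (hX1u j) (hX2u j)
  set J : Finset ℤ := Finset.Icc (-(n : ℤ)) n with hJ
  have hJmem : ∀ j : ℤ, j ∈ J ↔ |j| ≤ (n : ℤ) := fun j => by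
    rw [hJ, Finset.mem_Icc]; exact abs_le.symm
  have hzero : ∀ j : ℤ, j ∉ J → ‖∑ k ∈ v.support, PAP n Cm j k * v k‖ ^ 2 = 0 := by
    intro j hj
    have hrow0 : ∀ k ∈ v.support, PAP n Cm j k * v k = 0 := by
      intro k _
      have h0 : PAP n Cm j k = 0 := by
        simp only [PAP]
        exact if_neg (fun hc => hj ((hJmem j).2 hc.1))
      rw [h0, zero_mul]
    rw [Finset.sum_eq_zero hrow0, norm_zero]
    norm_num
  set S' := ∑ k ∈ v'.support, ‖v' k‖ ^ 2 with hS'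
  have hS'0 : 0 ≤ S' := Finset.sum_nonneg fun k _ => by positivity
  have hS'le : S' ≤ ∑ k ∈ v.support, ‖v k‖ ^ 2 := by
    have hsub : v'.support ⊆ v.support := by
      rw [hv'supp]; exact Finset.filter_subset _ _
    calc S' = ∑ k ∈ v'.support, ‖v k‖ ^ 2 :=
          Finset.sum_congr rfl fun k hk => by rw [hv'val k hk]
      _ ≤ ∑ k ∈ v.support, ‖v k‖ ^ 2 :=
          Finset.sum_le_sum_of_subset_of_nonneg hsub fun k _ _ => by positivity
  have hcore1 : ∑ j ∈ J, ‖∑' l : ℤ, X1 j l * u l‖ ^ 2 ≤ (CX1 * CB) ^ 2 * S' :=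
    core_bound X1 B J v' hX1mem hBmem u (fun l => rfl) husq hX1u
      (fun w => summable_row_sq hMa hra0 hra1 hdX1 w)
  have hcore2 : ∑ j ∈ J, ‖∑' l : ℤ, X2 j l * u l‖ ^ 2 ≤ (CX2 * CB) ^ 2 * S' :=
    core_bound X2 B J v' hX2mem hBmem u (fun l => rfl) husq hX2u
      (fun w => summable_row_sq hMa hra0 hra1 hdX2 w)
  have haa : ∑ j ∈ J, ‖∑' l : ℤ, X1 j l * u l‖ ^ 2 ≤ (CX1 * CB * Real.sqrt S') ^ 2 := by
    rw [mul_pow, Real.sq_sqrt hS'0]; exact hcore1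
  have hbb : ∑ j ∈ J, ‖∑' l : ℤ, X2 j l * u l‖ ^ 2 ≤ (CX2 * CB * Real.sqrt S') ^ 2 := by
    rw [mul_pow, Real.sq_sqrt hS'0]; exact hcore2
  have htri := l2_add_bound J (fun j => ∑' l : ℤ, X1 j l * u l) (fun j => ∑' l : ℤ, X2 j l * u l)
    (mul_nonneg (mul_nonneg hX1mem.1 hBmem.1) (Real.sqrt_nonneg _))
    (mul_nonneg (mul_nonneg hX2mem.1 hBmem.1) (Real.sqrt_nonneg _)) haa hbb
  calc ∑' j : ℤ, ‖∑ k ∈ v.support, PAP n Cm j k * v k‖ ^ 2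
      = ∑ j ∈ J, ‖∑ k ∈ v.support, PAP n Cm j k * v k‖ ^ 2 := tsum_eq_sum hzero
    _ = ∑ j ∈ J, ‖(∑' l : ℤ, X1 j l * u l) + ∑' l : ℤ, X2 j l * u l‖ ^ 2 :=
        Finset.sum_congr rfl fun j hj => by rw [hdecomp j ((hJmem j).1 hj)]
    _ ≤ (CX1 * CB * Real.sqrt S' + CX2 * CB * Real.sqrt S') ^ 2 := htri
    _ = ((CX1 + CX2) * CB) ^ 2 * S' := by
        rw [show CX1 * CB * Real.sqrt S' + CX2 * CB * Real.sqrt S'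
          = ((CX1 + CX2) * CB) * Real.sqrt S' by ring, mul_pow, Real.sq_sqrt hS'0]
    _ ≤ ((CX1 + CX2) * CB) ^ 2 * ∑ k ∈ v.support, ‖v k‖ ^ 2 :=
        mul_le_mul_of_nonneg_left hS'le (by positivity)

end LocAux

namespace LocAux

/-- Per-window bound, right factorization. -/
lemma pap_bound_right {a b : Symb} {Ma ra Mb rb : ℝ}
    (hMa : 0 ≤ Ma) (hra0 : 0 ≤ ra) (hra1 : ra < 1)
    (hMb : 0 ≤ Mb) (hrb0 : 0 ≤ rb) (hrb1 : rb < 1)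
    (hdA : ∀ j k, ‖Lmat a j k‖ ≤ Ma * ra ^ (j - k).natAbs)
    (hdB : ∀ j k, ‖Lmat b j k‖ ≤ Mb * rb ^ (j - k).natAbs)
    (hC : ∀ j k : ℤ, HasSum (fun l : ℤ => Lmat a j l * Lmat b l k) (Lmat (starProd a b) j k))
    (n m : ℕ) :
    matOpNorm (PAP n (Lmat (starProd a b)))
      ≤ (matOpNorm (PAP (n + m) (Lmat b)) + matOpNorm (QAP (n + m) n (Lmat b)))
        * matOpNorm (Lmat a) := by
  classical
  set A := Lmat a with hA_def
  set B := Lmat b with hB_def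
  set Cm := Lmat (starProd a b) with hCm_def
  set U1 := PAP (n + m) B with hU1d
  set U2 := QAP (n + m) n B with hU2d
  have hdU1 : ∀ j k, ‖U1 j k‖ ≤ Mb * rb ^ (j - k).natAbs := PAP_decay hMb hrb0 hdB (n + m)
  have hdU2 : ∀ j k, ‖U2 j k‖ ≤ Mb * rb ^ (j - k).natAbs := QAP_decay hMb hrb0 hdB (n + m) n
  have hU1mem : matOpNorm U1 ∈ opSet U1 := matOpNorm_mem ⟨_, schur_mem hMb hrb0 hrb1 hdU1⟩
  have hU2mem : matOpNorm U2 ∈ opSet U2 := matOpNorm_mem ⟨_, schur_mem hMb hrb0 hrb1 hdU2⟩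
  have hAmem : matOpNorm A ∈ opSet A := matOpNorm_mem ⟨_, schur_mem hMa hra0 hra1 hdA⟩
  set CU1 := matOpNorm U1 with hCU1
  set CU2 := matOpNorm U2 with hCU2
  set CA := matOpNorm A with hCA
  refine matOpNorm_le ⟨mul_nonneg (add_nonneg hU1mem.1 hU2mem.1) hAmem.1, fun v => ?_⟩
  set p : ℤ → Prop := fun k => |k| ≤ (n : ℤ) with hp
  set v' : ℤ →₀ ℂ := v.filter p with hv'
  have hv'supp : v'.support = v.support.filter p := by
    rw [hv', Finsupp.support_filter]
  have hv'val : ∀ k ∈ v'.support, v' k = v k := by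
    intro k hk
    rw [hv'supp, Finset.mem_filter] at hk
    rw [hv', Finsupp.filter_apply, if_pos hk.2]
  have hv'absle : ∀ k ∈ v'.support, |k| ≤ (n : ℤ) := fun k hk => by
    rw [hv'supp, Finset.mem_filter] at hk; exact hk.2
  set u : ℤ → ℂ := fun l => ∑ k ∈ v'.support, B l k * v' k with hu
  set u1 : ℤ → ℂ := fun l => ∑ k ∈ v'.support, U1 l k * v' k with hu1
  set u2 : ℤ → ℂ := fun l => ∑ k ∈ v'.support, U2 l k * v' k with hu2
  set Cu : ℝ := ∑ k ∈ v'.support, Mb * ‖v' k‖ with hCu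
  have hubd : ∀ l, ‖u l‖ ≤ Cu := fun l => u_bound hMb hrb0 hrb1 hdB v' l
  have hu1bd : ∀ l, ‖u1 l‖ ≤ Cu := fun l => u_bound hMb hrb0 hrb1 hdU1 v' l
  have hu2bd : ∀ l, ‖u2 l‖ ≤ Cu := fun l => u_bound hMb hrb0 hrb1 hdU2 v' l
  have hu1sq : Summable fun l : ℤ => ‖u1 l‖ ^ 2 := summable_row_sq hMb hrb0 hrb1 hdU1 v'
  have hu2sq : Summable fun l : ℤ => ‖u2 l‖ ^ 2 := summable_row_sq hMb hrb0 hrb1 hdU2 v'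
  have hAu : ∀ j, Summable fun l : ℤ => A j l * u l :=
    fun j => summable_X_u hra0 hra1 hdA hubd j
  have hAu1 : ∀ j, Summable fun l : ℤ => A j l * u1 l :=
    fun j => summable_X_u hra0 hra1 hdA hu1bd j
  have hAu2 : ∀ j, Summable fun l : ℤ => A j l * u2 l :=
    fun j => summable_X_u hra0 hra1 hdA hu2bd j
  -- pointwise splitting of the intermediate vector
  have hu1eq : ∀ l : ℤ, u1 l = if |l| ≤ ((n + m : ℕ) : ℤ) then u l else 0 := by
    intro l
    by_cases h : |l| ≤ ((n + m : ℕ) : ℤ)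
    · rw [if_pos h, hu1, hu]
      refine Finset.sum_congr rfl fun k hk => ?_
      have hk' : |k| ≤ ((n + m : ℕ) : ℤ) :=
        le_trans (hv'absle k hk) (by exact_mod_cast Nat.le_add_right n m)
      simp only [hU1d, PAP]
      rw [if_pos ⟨h, hk'⟩]
    · rw [if_neg h, hu1]
      refine Finset.sum_eq_zero fun k hk => ?_
      simp only [hU1d, PAP]
      rw [if_neg (fun hc => h hc.1), zero_mul]
  have hu2eq : ∀ l : ℤ, u2 l = if |l| ≤ ((n + m : ℕ) : ℤ) then 0 else u l := by
    intro l
    by_cases h : |l| ≤ ((n + m : ℕ) : ℤ)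
    · rw [if_pos h, hu2]
      refine Finset.sum_eq_zero fun k hk => ?_
      simp only [hU2d, QAP]
      rw [if_neg (fun hc => hc.1 h), zero_mul]
    · rw [if_neg h, hu2, hu]
      refine Finset.sum_congr rfl fun k hk => ?_
      simp only [hU2d, QAP]
      rw [if_pos ⟨h, hv'absle k hk⟩]
  have husplit : ∀ l : ℤ, u l = u1 l + u2 l := by
    intro l
    rw [hu1eq l, hu2eq l]
    by_cases h : |l| ≤ ((n + m : ℕ) : ℤ)
    · rw [if_pos h, if_pos h, add_zero]
    · rw [if_neg h, if_neg h, zero_add]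
  have hdecomp : ∀ j : ℤ, |j| ≤ (n : ℤ) →
      ∑ k ∈ v.support, PAP n Cm j k * v k
        = (∑' l : ℤ, A j l * u1 l) + ∑' l : ℤ, A j l * u2 l := by
    intro j hj
    have step1 : ∑ k ∈ v.support, PAP n Cm j k * v k = ∑ k ∈ v'.support, Cm j k * v' k := by
      calc ∑ k ∈ v.support, PAP n Cm j k * v k
          = ∑ k ∈ v.support, (if p k then Cm j k * v k else 0) := by
            refine Finset.sum_congr rfl fun k _ => ?_
            simp only [PAP, hp]
            by_cases h : |k| ≤ (n : ℤ)
            · rw [if_pos ⟨hj, h⟩, if_pos h]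
            · rw [if_neg (fun hc => h hc.2), if_neg h, zero_mul]
        _ = ∑ k ∈ v.support.filter p, Cm j k * v k := (Finset.sum_filter _ _).symm
        _ = ∑ k ∈ v'.support, Cm j k * v' k := by
            rw [hv'supp]
            refine Finset.sum_congr rfl fun k hk => ?_
            rw [hv', Finsupp.filter_apply, if_pos (Finset.mem_filter.1 hk).2]
    have step2 : ∑ k ∈ v'.support, Cm j k * v' k = ∑' l : ℤ, A j l * u l := by
      calc ∑ k ∈ v'.support, Cm j k * v' k
          = ∑ k ∈ v'.support, ∑' l : ℤ, A j l * B l k * v' k :=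
            Finset.sum_congr rfl fun k _ => (((hC j k).mul_right (v' k)).tsum_eq).symm
        _ = ∑' l : ℤ, ∑ k ∈ v'.support, A j l * B l k * v' k :=
            (Summable.tsum_finsetSum fun k _ => (hC j k).summable.mul_right (v' k)).symm
        _ = ∑' l : ℤ, A j l * u l := by
            refine tsum_congr fun l => ?_
            rw [hu, Finset.mul_sum]
            exact Finset.sum_congr rfl fun k _ => by ring
    rw [step1, step2]
    calc ∑' l : ℤ, A j l * u l = ∑' l : ℤ, (A j l * u1 l + A j l * u2 l) :=
          tsum_congr fun l => by rw [← mul_add, ← husplit l]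
      _ = _ := Summable.tsum_add (hAu1 j) (hAu2 j)
  set J : Finset ℤ := Finset.Icc (-(n : ℤ)) n with hJ
  have hJmem : ∀ j : ℤ, j ∈ J ↔ |j| ≤ (n : ℤ) := fun j => by
    rw [hJ, Finset.mem_Icc]; exact abs_le.symm
  have hzero : ∀ j : ℤ, j ∉ J → ‖∑ k ∈ v.support, PAP n Cm j k * v k‖ ^ 2 = 0 := by
    intro j hj
    have hrow0 : ∀ k ∈ v.support, PAP n Cm j k * v k = 0 := by
      intro k _
      have h0 : PAP n Cm j k = 0 := by
        simp only [PAP]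
        exact if_neg (fun hc => hj ((hJmem j).2 hc.1))
      rw [h0, zero_mul]
    rw [Finset.sum_eq_zero hrow0, norm_zero]
    norm_num
  set S' := ∑ k ∈ v'.support, ‖v' k‖ ^ 2 with hS'
  have hS'0 : 0 ≤ S' := Finset.sum_nonneg fun k _ => by positivity
  have hS'le : S' ≤ ∑ k ∈ v.support, ‖v k‖ ^ 2 := by
    have hsub : v'.support ⊆ v.support := by
      rw [hv'supp]; exact Finset.filter_subset _ _
    calc S' = ∑ k ∈ v'.support, ‖v k‖ ^ 2 :=
          Finset.sum_congr rfl fun k hk => by rw [hv'val k hk]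
      _ ≤ ∑ k ∈ v.support, ‖v k‖ ^ 2 :=
          Finset.sum_le_sum_of_subset_of_nonneg hsub fun k _ _ => by positivity
  have hcore1 : ∑ j ∈ J, ‖∑' l : ℤ, A j l * u1 l‖ ^ 2 ≤ (CA * CU1) ^ 2 * S' :=
    core_bound A U1 J v' hAmem hU1mem u1 (fun l => rfl) hu1sq hAu1
      (fun w => summable_row_sq hMa hra0 hra1 hdA w)
  have hcore2 : ∑ j ∈ J, ‖∑' l : ℤ, A j l * u2 l‖ ^ 2 ≤ (CA * CU2) ^ 2 * S' :=
    core_bound A U2 J v' hAmem hU2mem u2 (fun l => rfl) hu2sq hAu2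
      (fun w => summable_row_sq hMa hra0 hra1 hdA w)
  have haa : ∑ j ∈ J, ‖∑' l : ℤ, A j l * u1 l‖ ^ 2 ≤ (CA * CU1 * Real.sqrt S') ^ 2 := by
    rw [mul_pow, Real.sq_sqrt hS'0]; exact hcore1
  have hbb : ∑ j ∈ J, ‖∑' l : ℤ, A j l * u2 l‖ ^ 2 ≤ (CA * CU2 * Real.sqrt S') ^ 2 := by
    rw [mul_pow, Real.sq_sqrt hS'0]; exact hcore2
  have htri := l2_add_bound J (fun j => ∑' l : ℤ, A j l * u1 l) (fun j => ∑' l : ℤ, A j l * u2 l)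
    (mul_nonneg (mul_nonneg hAmem.1 hU1mem.1) (Real.sqrt_nonneg _))
    (mul_nonneg (mul_nonneg hAmem.1 hU2mem.1) (Real.sqrt_nonneg _)) haa hbb
  calc ∑' j : ℤ, ‖∑ k ∈ v.support, PAP n Cm j k * v k‖ ^ 2
      = ∑ j ∈ J, ‖∑ k ∈ v.support, PAP n Cm j k * v k‖ ^ 2 := tsum_eq_sum hzero
    _ = ∑ j ∈ J, ‖(∑' l : ℤ, A j l * u1 l) + ∑' l : ℤ, A j l * u2 l‖ ^ 2 :=
        Finset.sum_congr rfl fun j hj => by rw [hdecomp j ((hJmem j).1 hj)]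
    _ ≤ (CA * CU1 * Real.sqrt S' + CA * CU2 * Real.sqrt S') ^ 2 := htri
    _ = ((CU1 + CU2) * CA) ^ 2 * S' := by
        rw [show CA * CU1 * Real.sqrt S' + CA * CU2 * Real.sqrt S'
          = ((CU1 + CU2) * CA) * Real.sqrt S' by ring, mul_pow, Real.sq_sqrt hS'0]
    _ ≤ ((CU1 + CU2) * CA) ^ 2 * ∑ k ∈ v.support, ‖v k‖ ^ 2 :=
        mul_le_mul_of_nonneg_left hS'le (by positivity)

end LocAux
namespace LocAux

lemma summable_halfpow (c : ℝ) : Summable (fun n : ℕ => ((2:ℝ))⁻¹ ^ (n + 1) * c) := by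
  have h : Summable (fun n : ℕ => ((2:ℝ))⁻¹ ^ n * c) :=
    (summable_geometric_of_lt_one (by norm_num) (by norm_num)).mul_right c
  exact (summable_nat_add_iff 1).2 h

lemma shift_tsum_le (c : Symb) (m : ℕ) {Kc : ℝ}
    (hK : ∀ n : ℕ, matOpNorm (PAP n (Lmat c)) ≤ Kc) :
    ∑' n : ℕ, ((2:ℝ))⁻¹ ^ (n + 1) * matOpNorm (PAP (n + m) (Lmat c))
      ≤ (2:ℝ) ^ (m + 1) * locNorm c := by
  have h0 : ∀ n : ℕ, 0 ≤ matOpNorm (PAP n (Lmat c)) := fun n => matOpNorm_nonneg' _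
  have hf : Summable (fun n : ℕ => ((2:ℝ))⁻¹ ^ (n + 1) * matOpNorm (PAP (n + m) (Lmat c))) :=
    Summable.of_nonneg_of_le (fun n => mul_nonneg (by positivity) (h0 _))
      (fun n => mul_le_mul_of_nonneg_left (hK _) (by positivity)) (summable_halfpow Kc)
  have hg0 : Summable (fun n : ℕ => ((2:ℝ))⁻¹ ^ (n + 1) * matOpNorm (PAP n (Lmat c))) :=
    Summable.of_nonneg_of_le (fun n => mul_nonneg (by positivity) (h0 n))
      (fun n => mul_le_mul_of_nonneg_left (hK n) (by positivity)) (summable_halfpow Kc)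
  have hg : Summable (fun n : ℕ =>
      (2:ℝ) ^ (m + 1) * (((2:ℝ))⁻¹ ^ (n + 1) * matOpNorm (PAP n (Lmat c)))) :=
    hg0.mul_left _
  have hcoef : ∀ n : ℕ, (2:ℝ) ^ (m + 1) * ((2:ℝ))⁻¹ ^ ((n + m) + 1) = ((2:ℝ))⁻¹ ^ n := by
    intro n
    have h1 : ((2:ℝ))⁻¹ ^ ((n + m) + 1) = ((2:ℝ))⁻¹ ^ (m + 1) * ((2:ℝ))⁻¹ ^ n := by
      rw [← pow_add]; congr 1; omega
    rw [h1, ← mul_assoc, ← mul_pow]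
    norm_num
  have key := Summable.tsum_le_tsum_of_inj (fun n : ℕ => n + m) (add_left_injective m)
    (fun c' _ => mul_nonneg (by positivity) (mul_nonneg (by positivity) (h0 c')))
    (fun n => by
      show ((2:ℝ))⁻¹ ^ (n + 1) * matOpNorm (PAP (n + m) (Lmat c))
        ≤ (2:ℝ) ^ (m + 1) * (((2:ℝ))⁻¹ ^ ((n + m) + 1) * matOpNorm (PAP (n + m) (Lmat c)))
      rw [← mul_assoc, hcoef n]
      exact mul_le_mul_of_nonneg_right
        (pow_le_pow_of_le_one (by norm_num) (by norm_num) (Nat.le_succ n)) (h0 _))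
    hf hg
  calc ∑' n : ℕ, ((2:ℝ))⁻¹ ^ (n + 1) * matOpNorm (PAP (n + m) (Lmat c))
      ≤ ∑' n : ℕ, (2:ℝ) ^ (m + 1) * (((2:ℝ))⁻¹ ^ (n + 1) * matOpNorm (PAP n (Lmat c))) := key
    _ = (2:ℝ) ^ (m + 1) * locNorm c := tsum_mul_left

lemma loc_assembly {c : Symb} {α β : ℕ → ℝ} {γ Kc T1 : ℝ} (hγ0 : 0 ≤ γ)
    (hper : ∀ n : ℕ, matOpNorm (PAP n (Lmat c)) ≤ (α n + β n) * γ)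
    (hα0 : ∀ n, 0 ≤ α n) (hβ0 : ∀ n, 0 ≤ β n)
    (hαK : ∀ n, α n ≤ Kc) (hβK : ∀ n, β n ≤ Kc)
    (hT1 : ∑' n : ℕ, ((2:ℝ))⁻¹ ^ (n + 1) * α n ≤ T1) :
    locNorm c ≤ γ * (T1 + ∑' n : ℕ, ((2:ℝ))⁻¹ ^ (n + 1) * β n) := by
  have hsumα : Summable (fun n : ℕ => ((2:ℝ))⁻¹ ^ (n + 1) * α n) :=
    Summable.of_nonneg_of_le (fun n => mul_nonneg (by positivity) (hα0 n))
      (fun n => mul_le_mul_of_nonneg_left (hαK n) (by positivity)) (summable_halfpow Kc)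
  have hsumβ : Summable (fun n : ℕ => ((2:ℝ))⁻¹ ^ (n + 1) * β n) :=
    Summable.of_nonneg_of_le (fun n => mul_nonneg (by positivity) (hβ0 n))
      (fun n => mul_le_mul_of_nonneg_left (hβK n) (by positivity)) (summable_halfpow Kc)
  have hsumαγ : Summable (fun n : ℕ => ((2:ℝ))⁻¹ ^ (n + 1) * α n * γ) := hsumα.mul_right γ
  have hsumβγ : Summable (fun n : ℕ => ((2:ℝ))⁻¹ ^ (n + 1) * β n * γ) := hsumβ.mul_right γ
  have hsumtot : Summable (fun n : ℕ => ((2:ℝ))⁻¹ ^ (n + 1) * ((α n + β n) * γ)) := by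
    refine (hsumαγ.add hsumβγ).congr fun n => by ring
  have hsumloc : Summable (fun n : ℕ =>
      ((2:ℝ))⁻¹ ^ (n + 1) * matOpNorm (PAP n (Lmat c))) :=
    Summable.of_nonneg_of_le (fun n => mul_nonneg (by positivity) (matOpNorm_nonneg' _))
      (fun n => mul_le_mul_of_nonneg_left (hper n) (by positivity)) hsumtot
  have hβtsum0 : 0 ≤ ∑' n : ℕ, ((2:ℝ))⁻¹ ^ (n + 1) * β n :=
    tsum_nonneg fun n => mul_nonneg (by positivity) (hβ0 n)
  calc locNorm c
      ≤ ∑' n : ℕ, ((2:ℝ))⁻¹ ^ (n + 1) * ((α n + β n) * γ) :=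
        Summable.tsum_le_tsum (fun n => mul_le_mul_of_nonneg_left (hper n) (by positivity))
          hsumloc hsumtot
    _ = ∑' n : ℕ, (((2:ℝ))⁻¹ ^ (n + 1) * α n * γ + ((2:ℝ))⁻¹ ^ (n + 1) * β n * γ) :=
        tsum_congr fun n => by ring
    _ = (∑' n : ℕ, ((2:ℝ))⁻¹ ^ (n + 1) * α n * γ)
        + ∑' n : ℕ, ((2:ℝ))⁻¹ ^ (n + 1) * β n * γ := Summable.tsum_add hsumαγ hsumβγ
    _ = (∑' n : ℕ, ((2:ℝ))⁻¹ ^ (n + 1) * α n) * γ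
        + (∑' n : ℕ, ((2:ℝ))⁻¹ ^ (n + 1) * β n) * γ := by rw [tsum_mul_right, tsum_mul_right]
    _ ≤ γ * (T1 + ∑' n : ℕ, ((2:ℝ))⁻¹ ^ (n + 1) * β n) := by
        nlinarith [mul_nonneg hγ0 (sub_nonneg.2 hT1)]

end LocAux
/-- **Bounds for the localization norm of a star product** (Lemma 3.9 of the paper).
For `a, b ∈ V` and `m ∈ ℕ₀`,
`‖a⋆b‖_loc ≤ ‖L(b)‖ (2^{m+1} ‖a‖_loc + ∑_n 2^{-(n+1)} ‖P̃_n L(a) Q̃_{n+m}‖)` and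
`‖a⋆b‖_loc ≤ ‖L(a)‖ (2^{m+1} ‖b‖_loc + ∑_n 2^{-(n+1)} ‖Q̃_{n+m} L(b) P̃_n‖)`. -/
theorem loc_norm_star_product_bound (a b : Symb) (ha : memV a) (hb : memV b) (m : ℕ) :
    locNorm (starProd a b) ≤
      matOpNorm (Lmat b) *
        ((2 : ℝ) ^ (m + 1) * locNorm a +
          ∑' n : ℕ, ((2 : ℝ))⁻¹ ^ (n + 1) * matOpNorm (PAQ n (n + m) (Lmat a))) ∧
    locNorm (starProd a b) ≤
      matOpNorm (Lmat a) *
        ((2 : ℝ) ^ (m + 1) * locNorm b +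
          ∑' n : ℕ, ((2 : ℝ))⁻¹ ^ (n + 1) * matOpNorm (QAP (n + m) n (Lmat b))) := by
  obtain ⟨Ma, ra, hMa, hra0, hra1, hfa⟩ := LocAux.memV_decay ha
  obtain ⟨Mb, rb, hMb, hrb0, hrb1, hfb⟩ := LocAux.memV_decay hb
  have hdA : ∀ j k : ℤ, ‖Lmat a j k‖ ≤ Ma * ra ^ (j - k).natAbs := fun j k => hfa (j + k) (j - k)
  have hdB : ∀ j k : ℤ, ‖Lmat b j k‖ ≤ Mb * rb ^ (j - k).natAbs := fun j k => hfb (j + k) (j - k)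
  have hC : ∀ j k : ℤ, HasSum (fun l : ℤ => Lmat a j l * Lmat b l k)
      (Lmat (starProd a b) j k) := fun j k => LocAux.hasSum_Lmat_starProd ha hb j k
  constructor
  · have hper : ∀ n : ℕ, matOpNorm (PAP n (Lmat (starProd a b)))
        ≤ (matOpNorm (PAP (n + m) (Lmat a)) + matOpNorm (PAQ n (n + m) (Lmat a)))
          * matOpNorm (Lmat b) :=
      fun n => LocAux.pap_bound_left hMa hra0 hra1 hMb hrb0 hrb1 hdA hdB hC n m
    have hαK : ∀ n : ℕ, matOpNorm (PAP (n + m) (Lmat a)) ≤ Ma * ∑' d : ℤ, ra ^ d.natAbs :=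
      fun n => LocAux.matOpNorm_le
        (LocAux.schur_mem hMa hra0 hra1 (LocAux.PAP_decay hMa hra0 hdA (n + m)))
    have hβK : ∀ n : ℕ, matOpNorm (PAQ n (n + m) (Lmat a)) ≤ Ma * ∑' d : ℤ, ra ^ d.natAbs :=
      fun n => LocAux.matOpNorm_le
        (LocAux.schur_mem hMa hra0 hra1 (LocAux.PAQ_decay hMa hra0 hdA n (n + m)))
    have hT1 := LocAux.shift_tsum_le a m (fun n => LocAux.matOpNorm_le
      (LocAux.schur_mem hMa hra0 hra1 (LocAux.PAP_decay hMa hra0 hdA n)))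
    exact LocAux.loc_assembly (LocAux.matOpNorm_nonneg' _) hper
      (fun n => LocAux.matOpNorm_nonneg' _) (fun n => LocAux.matOpNorm_nonneg' _)
      hαK hβK hT1
  · have hper : ∀ n : ℕ, matOpNorm (PAP n (Lmat (starProd a b)))
        ≤ (matOpNorm (PAP (n + m) (Lmat b)) + matOpNorm (QAP (n + m) n (Lmat b)))
          * matOpNorm (Lmat a) :=
      fun n => LocAux.pap_bound_right hMa hra0 hra1 hMb hrb0 hrb1 hdA hdB hC n m
    have hαK : ∀ n : ℕ, matOpNorm (PAP (n + m) (Lmat b)) ≤ Mb * ∑' d : ℤ, rb ^ d.natAbs :=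
      fun n => LocAux.matOpNorm_le
        (LocAux.schur_mem hMb hrb0 hrb1 (LocAux.PAP_decay hMb hrb0 hdB (n + m)))
    have hβK : ∀ n : ℕ, matOpNorm (QAP (n + m) n (Lmat b)) ≤ Mb * ∑' d : ℤ, rb ^ d.natAbs :=
      fun n => LocAux.matOpNorm_le
        (LocAux.schur_mem hMb hrb0 hrb1 (LocAux.QAP_decay hMb hrb0 hdB (n + m) n))
    have hT1 := LocAux.shift_tsum_le b m (fun n => LocAux.matOpNorm_le
      (LocAux.schur_mem hMb hrb0 hrb1 (LocAux.PAP_decay hMb hrb0 hdB n)))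
    exact LocAux.loc_assembly (LocAux.matOpNorm_nonneg' _) hper
      (fun n => LocAux.matOpNorm_nonneg' _) (fun n => LocAux.matOpNorm_nonneg' _)
      hαK hβK hT1

end
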